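/- arXiv:1203.5379 — 4 statements merged into one kernel-verified Lean document; each statement's English description precedes it below -/
import Mathlib

section
/- For every nonzero polynomial P ∈ ℂ[x_1,…,x_n] there exist constants C_P > 0, δ_P > 0 and y_P > 0 such that for all 0 < y < y_P, μ_n(S_n(P,y)) ≤ C_P · y^{δ_P}. -/
open MeasureTheory Real


lemma jordan_abs {x : ℝ} (h : |x| ≤ π/2) : 2/π * |x| ≤ |Real.sin x| := by
  rcases le_or_gt 0 x with hx | hx
  · rw [abs_of_nonneg hx] at h ⊢
    exact (Real.mul_le_sin hx h).trans (le_abs_self _)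
  · rw [abs_of_neg hx] at h ⊢
    calc 2/π * -x ≤ Real.sin (-x) := Real.mul_le_sin (by linarith) h
      _ ≤ |Real.sin (-x)| := le_abs_self _
      _ = |Real.sin x| := by rw [Real.sin_neg, abs_neg]

lemma arc_bound (r : ℂ) {ε : ℝ} (hε : 0 < ε) :
    volume {θ : ℝ | θ ∈ Set.Ioc 0 (2*π) ∧ ‖Complex.exp ((θ:ℂ) * Complex.I) - r‖ < ε} ≤
      ENNReal.ofReal (13 * ε) := by
  rcases le_or_gt (1/2 : ℝ) ε with hε2 | hε2
  · calc volume {θ : ℝ | θ ∈ Set.Ioc 0 (2*π) ∧ ‖Complex.exp ((θ:ℂ) * Complex.I) - r‖ < ε}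
        ≤ volume (Set.Ioc (0:ℝ) (2*π)) := measure_mono (fun θ hθ => hθ.1)
      _ = ENNReal.ofReal (2*π) := by simp [Real.volume_Ioc]
      _ ≤ ENNReal.ofReal (13 * ε) := by
          apply ENNReal.ofReal_le_ofReal; nlinarith [Real.pi_lt_d2]
  · rcases le_or_gt (‖r‖) (1/2) with hr | hr
    · have : {θ : ℝ | θ ∈ Set.Ioc 0 (2*π) ∧ ‖Complex.exp ((θ:ℂ) * Complex.I) - r‖ < ε} = ∅ := by
        ext θ
        simp only [Set.mem_setOf_eq, Set.mem_empty_iff_false, iff_false, not_and]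
        intro _
        have h1 : ‖Complex.exp ((θ:ℂ) * Complex.I)‖ = 1 := Complex.norm_exp_ofReal_mul_I θ
        have h2 : ‖Complex.exp ((θ:ℂ) * Complex.I)‖ - ‖r‖
            ≤ ‖Complex.exp ((θ:ℂ) * Complex.I) - r‖ := by
          simpa using norm_sub_norm_le (Complex.exp ((θ:ℂ) * Complex.I)) r
        rw [h1] at h2
        linarith
      rw [this]; simp
    · set φ := r.arg with hφ
      set c := π/2 * ε with hc
      have hcpos : 0 < c := by positivity
      have key : ∀ θ : ℝ, ‖Complex.exp ((θ:ℂ) * Complex.I) - r‖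
          = ‖Complex.exp (((θ - φ : ℝ):ℂ) * Complex.I) - (‖r‖ : ℂ)‖ := by
        intro θ
        have hr' : (‖r‖ : ℂ) * Complex.exp ((φ:ℂ) * Complex.I) = r :=
          Complex.norm_mul_exp_arg_mul_I r
        have heq : Complex.exp ((θ:ℂ) * Complex.I) - r
            = Complex.exp ((φ:ℂ) * Complex.I) * (Complex.exp (((θ - φ : ℝ):ℂ) * Complex.I) - (‖r‖ : ℂ)) := by
          rw [mul_sub, ← Complex.exp_add]
          congr 1
          · congr 1; push_cast; ring
          · rw [mul_comm]; exact hr'.symm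
        rw [heq, norm_mul, Complex.norm_exp_ofReal_mul_I, one_mul]
      have subs : {θ : ℝ | θ ∈ Set.Ioc 0 (2*π) ∧ ‖Complex.exp ((θ:ℂ) * Complex.I) - r‖ < ε}
          ⊆ Set.Ioo (φ - c) (φ + c) ∪ Set.Ioo (φ + 2*π - c) (φ + 2*π + c) := by
        rintro θ ⟨hθ, habs⟩
        rw [key θ] at habs
        set ψ := θ - φ with hψ
        have him : |Real.sin ψ| < ε := by
          have h1 : |(Complex.exp ((ψ:ℂ) * Complex.I) - (‖r‖ : ℂ)).im|
              ≤ ‖Complex.exp ((ψ:ℂ) * Complex.I) - (‖r‖ : ℂ)‖ :=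
            Complex.abs_im_le_norm _
          rw [Complex.sub_im, Complex.ofReal_im, Complex.exp_ofReal_mul_I_im, sub_zero] at h1
          linarith
        have hre : |Real.cos ψ - ‖r‖| < ε := by
          have h1 : |(Complex.exp ((ψ:ℂ) * Complex.I) - (‖r‖ : ℂ)).re|
              ≤ ‖Complex.exp ((ψ:ℂ) * Complex.I) - (‖r‖ : ℂ)‖ :=
            Complex.abs_re_le_norm _
          rw [Complex.sub_re, Complex.ofReal_re, Complex.exp_ofReal_mul_I_re] at h1
          linarith
        have hcos : 0 < Real.cos ψ := by
          have := abs_lt.mp hre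
          linarith [this.1]
        have hφ1 : -π < φ := Complex.neg_pi_lt_arg r
        have hφ2 : φ ≤ π := Complex.arg_le_pi r
        have hπ := Real.pi_pos
        have main : ∀ x : ℝ, -π < x → x ≤ π → 0 < Real.cos x → |Real.sin x| < ε → |x| < c := by
          intro x hx1 hx2 hcx hsx
          have habs2 : |x| < π/2 := by
            by_contra h
            push_neg at h
            have : Real.cos |x| ≤ 0 :=
              Real.cos_nonpos_of_pi_div_two_le_of_le h (by cases abs_cases x with
                | inl h' => linarith [h'.1]
                | inr h' => linarith [h'.1])
            rw [Real.cos_abs] at this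
            linarith
          have hj := jordan_abs (le_of_lt habs2)
          have h2 : 2/π * |x| < ε := lt_of_le_of_lt hj hsx
          have key2 : 2/π * |x| * (π/2) = |x| := by field_simp
          calc |x| = 2/π * |x| * (π/2) := key2.symm
            _ < ε * (π/2) := mul_lt_mul_of_pos_right h2 (by positivity)
            _ = c := by rw [hc]; ring
        rcases le_or_gt ψ π with hcase | hcase
        · left
          have h3 := abs_lt.mp (main ψ (by simp only [hψ]; linarith [hθ.1]) hcase hcos him)
          simp only [hψ] at h3
          exact Set.mem_Ioo.mpr ⟨by linarith [h3.1], by linarith [h3.2]⟩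
        · right
          have h1 : -π < ψ - 2*π := by simp only [hψ]; linarith [hθ.2]
          have h2 : ψ - 2*π ≤ π := by simp only [hψ]; linarith [hθ.2]
          have h3 : |ψ - 2*π| < c := by
            apply main _ h1 h2
            · rw [Real.cos_sub_two_pi]; exact hcos
            · rw [Real.sin_sub_two_pi]; exact him
          have h4 := abs_lt.mp h3
          simp only [hψ] at h4
          exact Set.mem_Ioo.mpr ⟨by linarith [h4.1], by linarith [h4.2]⟩
      calc volume {θ : ℝ | θ ∈ Set.Ioc 0 (2*π) ∧ ‖Complex.exp ((θ:ℂ) * Complex.I) - r‖ < ε}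
          ≤ volume (Set.Ioo (φ - c) (φ + c) ∪ Set.Ioo (φ + 2*π - c) (φ + 2*π + c)) :=
            measure_mono subs
        _ ≤ volume (Set.Ioo (φ - c) (φ + c)) + volume (Set.Ioo (φ + 2*π - c) (φ + 2*π + c)) :=
            measure_union_le _ _
        _ ≤ ENNReal.ofReal (13 * ε) := by
            rw [Real.volume_Ioo, Real.volume_Ioo,
              ← ENNReal.ofReal_add (by linarith) (by linarith)]
            apply ENNReal.ofReal_le_ofReal
            have h315 := Real.pi_lt_d2
            have : φ + c - (φ - c) + (φ + 2*π + c - (φ + 2*π - c)) = 2*π*ε := by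
              rw [hc]; ring
            rw [this]
            nlinarith

lemma prod_abs_lower (z : ℂ) {ε : ℝ} (hε : 0 ≤ ε) (s : Multiset ℂ)
    (h : ∀ r ∈ s, ε ≤ ‖z - r‖) :
    ε ^ (Multiset.card s) ≤ (s.map (fun r => ‖z - r‖)).prod := by
  induction s using Multiset.induction with
  | empty => simp
  | cons a s ih =>
    simp only [Multiset.map_cons, Multiset.prod_cons, Multiset.card_cons, pow_succ']
    exact mul_le_mul (h a (Multiset.mem_cons_self a s))
      (ih fun r hr => h r (Multiset.mem_cons_of_mem hr))
      (pow_nonneg hε _) (norm_nonneg _)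

lemma poly_slice_bound (q : Polynomial ℂ) (hd : 1 ≤ q.natDegree) {y ε : ℝ} (hε : 0 < ε)
    (hq : y ≤ ‖q.leadingCoeff‖ * ε ^ q.natDegree) :
    volume {θ : ℝ | θ ∈ Set.Ioc 0 (2*π) ∧
        ‖q.eval (Complex.exp ((θ:ℂ) * Complex.I))‖ < y} ≤
      ENNReal.ofReal (13 * q.natDegree * ε) := by
  have hq0 : q ≠ 0 := fun h => by simp [h] at hd
  have hlc : q.leadingCoeff ≠ 0 := Polynomial.leadingCoeff_ne_zero.mpr hq0
  have hlc' : 0 < ‖q.leadingCoeff‖ := norm_pos_iff.mpr hlc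
  have hsplit : q.Splits := IsAlgClosed.splits q
  have hcard : Multiset.card q.roots = q.natDegree :=
    (Polynomial.splits_iff_card_roots).mp hsplit
  have heval : ∀ z : ℂ, ‖q.eval z‖ =
      ‖q.leadingCoeff‖ * ((q.roots.map (fun r => ‖z - r‖)).prod) := by
    intro z
    conv_lhs => rw [hsplit.eq_prod_roots]
    rw [Polynomial.eval_mul, Polynomial.eval_C, norm_mul]
    congr 1
    rw [Polynomial.eval_multiset_prod, Multiset.map_map,
      show ∀ m : Multiset ℂ, ‖m.prod‖ = (m.map (‖·‖)).prod from
        fun m => map_multiset_prod (normHom : ℂ →*₀ ℝ) m, Multiset.map_map]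
    congr 1
    apply Multiset.map_congr rfl
    intro r _
    simp
  have subs : {θ : ℝ | θ ∈ Set.Ioc 0 (2*π) ∧
        ‖q.eval (Complex.exp ((θ:ℂ) * Complex.I))‖ < y}
      ⊆ ⋃ r ∈ q.roots.toFinset,
          {θ : ℝ | θ ∈ Set.Ioc 0 (2*π) ∧ ‖Complex.exp ((θ:ℂ) * Complex.I) - r‖ < ε} := by
    rintro θ ⟨hθ, habs⟩
    set z := Complex.exp ((θ:ℂ) * Complex.I)
    have hprod : (q.roots.map (fun r => ‖z - r‖)).prod < ε ^ q.natDegree := by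
      rw [heval z] at habs
      exact (mul_lt_mul_iff_right₀ hlc').mp (lt_of_lt_of_le habs hq)
    have : ∃ r ∈ q.roots, ‖z - r‖ < ε := by
      by_contra h
      push_neg at h
      have := prod_abs_lower z hε.le q.roots h
      rw [hcard] at this
      linarith
    obtain ⟨r, hr, hrε⟩ := this
    exact Set.mem_biUnion (Multiset.mem_toFinset.mpr hr) ⟨hθ, hrε⟩
  calc volume {θ : ℝ | θ ∈ Set.Ioc 0 (2*π) ∧
        ‖q.eval (Complex.exp ((θ:ℂ) * Complex.I))‖ < y}
      ≤ volume (⋃ r ∈ q.roots.toFinset,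
          {θ : ℝ | θ ∈ Set.Ioc 0 (2*π) ∧ ‖Complex.exp ((θ:ℂ) * Complex.I) - r‖ < ε}) :=
        measure_mono subs
    _ ≤ ∑ r ∈ q.roots.toFinset,
          volume {θ : ℝ | θ ∈ Set.Ioc 0 (2*π) ∧ ‖Complex.exp ((θ:ℂ) * Complex.I) - r‖ < ε} :=
        measure_biUnion_finset_le _ _
    _ ≤ ∑ r ∈ q.roots.toFinset, ENNReal.ofReal (13 * ε) :=
        Finset.sum_le_sum fun r _ => arc_bound r hε
    _ = (q.roots.toFinset.card : ENNReal) * ENNReal.ofReal (13 * ε) := by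
        rw [Finset.sum_const, nsmul_eq_mul]
    _ ≤ (q.natDegree : ENNReal) * ENNReal.ofReal (13 * ε) := by
        apply mul_le_mul_left
        exact_mod_cast le_trans (Multiset.toFinset_card_le _) (le_of_eq hcard)
    _ = ENNReal.ofReal (13 * q.natDegree * ε) := by
        rw [← ENNReal.ofReal_natCast q.natDegree, ← ENNReal.ofReal_mul (by positivity)]
        congr 1
        ring

lemma continuous_mv_eval {σ : Type*} {X : Type*} [TopologicalSpace X]
    (P : MvPolynomial σ ℂ) (f : X → σ → ℂ) (hf : ∀ j, Continuous fun x => f x j) :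
    Continuous fun x => MvPolynomial.eval (f x) P := by
  induction P using MvPolynomial.induction_on with
  | C a => simpa using continuous_const
  | add p q hp hq => simp only [map_add]; exact hp.add hq
  | mul_X p j hp => simp only [map_mul, MvPolynomial.eval_X]; exact hp.mul (hf j)

set_option maxHeartbeats 1000000 in
/-- For every nonzero polynomial `P ∈ ℂ[x₁,…,xₙ]` there are constants
`C_P > 0`, `δ_P > 0` and `y_P > 0` such that for all `0 < y < y_P` the measure of
`S_n(P, y) = {(z₁,…,zₙ) ∈ 𝕋ⁿ : |P(z₁,…,zₙ)| < y}` is at most `C_P * y^{δ_P}`.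
The torus `𝕋ⁿ` is parametrized by `θ ∈ (0, 2π]ⁿ ↦ (e^{iθ₁},…,e^{iθₙ})`, so the
product arc-length measure of a set is the Lebesgue measure of the corresponding
set of parameters. -/
theorem measure_small_value_set_bound (n : ℕ) (P : MvPolynomial (Fin n) ℂ) (hP : P ≠ 0) :
    ∃ C : ℝ, 0 < C ∧ ∃ δ : ℝ, 0 < δ ∧ ∃ yP : ℝ, 0 < yP ∧
      ∀ y : ℝ, 0 < y → y < yP →
        volume {θ : Fin n → ℝ | (∀ j, θ j ∈ Set.Ioc (0:ℝ) (2*π)) ∧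
            ‖MvPolynomial.eval (fun j => Complex.exp ((θ j : ℂ) * Complex.I)) P‖ < y}
          ≤ ENNReal.ofReal (C * y ^ δ) := by
  induction n with
  | zero =>
    obtain ⟨a, rfl⟩ := MvPolynomial.C_surjective (Fin 0) P
    have ha : a ≠ 0 := fun h => hP (by rw [h, map_zero])
    refine ⟨1, one_pos, 1, one_pos, ‖a‖, norm_pos_iff.mpr ha, fun y hy hylt => ?_⟩
    have hempty : {θ : Fin 0 → ℝ | (∀ j, θ j ∈ Set.Ioc (0:ℝ) (2*π)) ∧
        ‖MvPolynomial.eval (fun j => Complex.exp ((θ j : ℂ) * Complex.I))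
          (MvPolynomial.C a)‖ < y} = ∅ := by
      ext θ
      simp only [MvPolynomial.eval_C, Set.mem_setOf_eq, Set.mem_empty_iff_false, iff_false,
        not_and]
      intro _
      linarith
    rw [hempty]
    simp
  | succ n ih =>
    classical
    set Q : Polynomial (MvPolynomial (Fin n) ℂ) := MvPolynomial.finSuccEquiv ℂ n P with hQdef
    have hQ0 : Q ≠ 0 := by
      simp only [hQdef, ne_eq, EmbeddingLike.map_eq_zero_iff]
      exact hP
    set d : ℕ := Q.natDegree with hddef
    set L : MvPolynomial (Fin n) ℂ := Q.leadingCoeff with hLdef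
    have hL0 : L ≠ 0 := Polynomial.leadingCoeff_ne_zero.mpr hQ0
    obtain ⟨C', hC', δ', hδ', y', hy', hIH⟩ := ih L hL0
    refine ⟨2*π*C' + (2*π)^n * 13 * d + 1, by positivity,
      min (δ'/2) (1/(2*(d:ℝ)+2)), lt_min (by linarith) (by positivity),
      min 1 (y'^2), lt_min one_pos (by positivity), fun y hy hylt => ?_⟩
    set δ : ℝ := min (δ'/2) (1/(2*(d:ℝ)+2)) with hδdef
    have hδpos : 0 < δ := lt_min (by linarith) (by positivity)
    have hy1 : y < 1 := lt_of_lt_of_le hylt (min_le_left _ _)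
    have hyy' : y < y'^2 := lt_of_lt_of_le hylt (min_le_right _ _)
    have hyδpos : 0 < y ^ δ := Real.rpow_pos_of_pos hy _
    set sqy : ℝ := y ^ ((1:ℝ)/2) with hsqydef
    have hsqy0 : 0 < sqy := Real.rpow_pos_of_pos hy _
    have hsqyy' : sqy < y' := by
      have h1 : sqy < (y'^2) ^ ((1:ℝ)/2) := Real.rpow_lt_rpow hy.le hyy' (by norm_num)
      have h2 : (y'^2 : ℝ) ^ ((1:ℝ)/2) = y' := by
        rw [← Real.rpow_natCast y' 2, ← Real.rpow_mul hy'.le]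
        norm_num
      rwa [h2] at h1
    have hysqy : y < sqy := by
      have := Real.rpow_lt_rpow_of_exponent_gt hy hy1 (show (1:ℝ)/2 < 1 by norm_num)
      rwa [Real.rpow_one] at this
    have hsqysq : sqy * sqy = y := by
      rw [hsqydef, ← Real.rpow_add hy]
      norm_num
    have hsqyδ : sqy ^ δ' ≤ y ^ δ := by
      have h1 : sqy ^ δ' = y ^ (δ'/2) := by
        rw [hsqydef, ← Real.rpow_mul hy.le]
        congr 1
        ring
      rw [h1]
      exact Real.rpow_le_rpow_of_exponent_ge hy hy1.le (min_le_left _ _)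
    -- the evaluation functions
    set F : ℝ × (Fin n → ℝ) → ℂ := fun p =>
      MvPolynomial.eval
        (fun j => Complex.exp (((Fin.cons p.1 p.2 : Fin (n+1) → ℝ) j : ℂ) * Complex.I)) P
      with hFdef
    have hFcont : Continuous F := by
      apply continuous_mv_eval
      intro j
      apply Complex.continuous_exp.comp
      apply Continuous.mul _ continuous_const
      apply Complex.continuous_ofReal.comp
      refine Fin.cases ?_ ?_ j
      · simpa using continuous_fst
      · intro i
        simpa [Function.comp_def] using (continuous_apply i).comp continuous_snd
    set G : (Fin n → ℝ) → ℂ := fun θ' =>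
      MvPolynomial.eval (fun j => Complex.exp ((θ' j : ℂ) * Complex.I)) L with hGdef
    have hGcont : Continuous G := by
      apply continuous_mv_eval
      intro j
      exact Complex.continuous_exp.comp
        ((Complex.continuous_ofReal.comp (continuous_apply j)).mul continuous_const)
    have hFeq : ∀ p : ℝ × (Fin n → ℝ), F p
        = Polynomial.eval (Complex.exp ((p.1:ℂ) * Complex.I))
            (Q.map (MvPolynomial.eval (fun j => Complex.exp ((p.2 j : ℂ) * Complex.I)))) := by
      intro p
      have hfun : (fun j => Complex.exp (((Fin.cons p.1 p.2 : Fin (n+1) → ℝ) j : ℂ) * Complex.I))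
          = Fin.cons (Complex.exp ((p.1:ℂ) * Complex.I))
              (fun j => Complex.exp ((p.2 j : ℂ) * Complex.I)) := by
        funext j
        refine Fin.cases ?_ ?_ j
        · simp
        · intro i
          simp
      rw [hFdef]
      simp only [hfun]
      rw [MvPolynomial.eval_eq_eval_mv_eval']
    -- the region Ω of good angle tuples
    set Ω : Set (Fin n → ℝ) := Set.univ.pi fun _ : Fin n => Set.Ioc (0:ℝ) (2*π) with hΩdef
    have hΩmeas : MeasurableSet Ω := MeasurableSet.univ_pi fun _ => measurableSet_Ioc
    have hΩmem : ∀ θ' : Fin n → ℝ, θ' ∈ Ω ↔ ∀ j, θ' j ∈ Set.Ioc (0:ℝ) (2*π) := by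
      intro θ'
      simp [hΩdef]
    have hΩvol : volume Ω = ENNReal.ofReal ((2*π)^n) := by
      rw [hΩdef, volume_pi_pi]
      simp only [Real.volume_Ioc, sub_zero]
      rw [Finset.prod_const, ← ENNReal.ofReal_pow (by positivity)]
      simp
    -- the target set T in the product space
    set T : Set (ℝ × (Fin n → ℝ)) := {p | (p.1 ∈ Set.Ioc (0:ℝ) (2*π) ∧ p.2 ∈ Ω) ∧
        ‖F p‖ < y} with hTdef
    have hTmeas : MeasurableSet T := by
      exact (((measurable_fst measurableSet_Ioc).inter (measurable_snd hΩmeas)).inter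
        (measurableSet_lt (continuous_norm.comp hFcont).measurable measurable_const))
    -- transfer the original volume to the product space
    have hvolT : volume {θ : Fin (n+1) → ℝ | (∀ j, θ j ∈ Set.Ioc (0:ℝ) (2*π)) ∧
        ‖MvPolynomial.eval (fun j => Complex.exp ((θ j : ℂ) * Complex.I)) P‖ < y}
        = (volume.prod volume) T := by
      have hmp := volume_preserving_piFinSuccAbove (fun _ : Fin (n+1) => ℝ) 0
      have hSeq : {θ : Fin (n+1) → ℝ | (∀ j, θ j ∈ Set.Ioc (0:ℝ) (2*π)) ∧
          ‖MvPolynomial.eval (fun j => Complex.exp ((θ j : ℂ) * Complex.I)) P‖ < y}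
          = (MeasurableEquiv.piFinSuccAbove (fun _ : Fin (n+1) => ℝ) 0) ⁻¹' T := by
        ext θ
        have heθ : (MeasurableEquiv.piFinSuccAbove (fun _ : Fin (n+1) => ℝ) 0) θ
            = (θ 0, fun j => θ j.succ) := by
          ext
          · simp [MeasurableEquiv.piFinSuccAbove]
          · simp [MeasurableEquiv.piFinSuccAbove, Fin.zero_succAbove, Fin.tail]
        simp only [Set.mem_preimage, heθ, hTdef, Set.mem_setOf_eq, hΩmem, Set.mem_setOf_eq]
        have hcons : (Fin.cons (θ 0) (fun j => θ j.succ) : Fin (n+1) → ℝ) = θ :=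
          Fin.cons_self_tail θ
        have hFθ : F (θ 0, fun j => θ j.succ)
            = MvPolynomial.eval (fun j => Complex.exp ((θ j : ℂ) * Complex.I)) P := by
          rw [hFdef]
          simp only [hcons]
        rw [hFθ]
        constructor
        · rintro ⟨h1, h2⟩
          exact ⟨⟨h1 0, fun j => h1 j.succ⟩, h2⟩
        · rintro ⟨⟨h0, hs⟩, h2⟩
          exact ⟨fun j => Fin.cases h0 hs j, h2⟩
      rw [hSeq, ← Measure.volume_eq_prod]
      exact hmp.measure_preimage hTmeas.nullMeasurableSet
    -- decomposition T ⊆ A ∪ B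
    set A : Set (ℝ × (Fin n → ℝ)) := (Set.Ioc (0:ℝ) (2*π)) ×ˢ
        {θ' | (∀ j, θ' j ∈ Set.Ioc (0:ℝ) (2*π)) ∧ ‖G θ'‖ < sqy} with hAdef
    set B : Set (ℝ × (Fin n → ℝ)) := {p | (p.2 ∈ Ω ∧ sqy ≤ ‖G p.2‖) ∧
        (p.1 ∈ Set.Ioc (0:ℝ) (2*π) ∧ ‖F p‖ < y)} with hBdef
    have hTsub : T ⊆ A ∪ B := by
      rintro ⟨t, θ'⟩ ⟨⟨ht, hθ'⟩, habs⟩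
      rcases lt_or_ge (‖G θ'‖) sqy with h | h
      · exact Or.inl ⟨ht, (hΩmem θ').mp hθ', h⟩
      · exact Or.inr ⟨⟨hθ', h⟩, ht, habs⟩
    have hBmeas : MeasurableSet B := by
      refine MeasurableSet.inter (MeasurableSet.inter (measurable_snd hΩmeas) ?_)
        (MeasurableSet.inter (measurable_fst measurableSet_Ioc)
          (measurableSet_lt (continuous_norm.comp hFcont).measurable measurable_const))
      exact measurableSet_le measurable_const
        (continuous_norm.comp (hGcont.comp continuous_snd)).measurable
    -- bound for A
    have hvolA : (volume.prod volume) A ≤ ENNReal.ofReal (2*π*C' * y ^ δ) := by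
      rw [hAdef, Measure.prod_prod, Real.volume_Ioc, sub_zero]
      calc ENNReal.ofReal (2*π) * volume {θ' : Fin n → ℝ |
            (∀ j, θ' j ∈ Set.Ioc (0:ℝ) (2*π)) ∧ ‖G θ'‖ < sqy}
          ≤ ENNReal.ofReal (2*π) * ENNReal.ofReal (C' * sqy ^ δ') :=
            mul_le_mul_right (hIH sqy hsqy0 hsqyy') _
        _ = ENNReal.ofReal (2*π * (C' * sqy ^ δ')) := by
            rw [← ENNReal.ofReal_mul (by positivity)]
        _ ≤ ENNReal.ofReal (2*π*C' * y ^ δ) := by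
            apply ENNReal.ofReal_le_ofReal
            have := mul_le_mul_of_nonneg_left hsqyδ (le_of_lt hC')
            nlinarith [Real.pi_pos]
    -- bound for B
    have hvolB : (volume.prod volume) B ≤ ENNReal.ofReal ((2*π)^n * 13 * d * y ^ δ) := by
      rcases Nat.eq_zero_or_pos d with hd0 | hd1
      · -- degree 0 in the last variable: B is empty
        obtain ⟨a, ha⟩ := Polynomial.natDegree_eq_zero.mp hd0
        have hQC : Q = Polynomial.C L := by
          rw [← ha]
          congr 1
          rw [hLdef, ← ha, Polynomial.leadingCoeff_C]
        have hBempty : B = ∅ := by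
          ext ⟨t, θ'⟩
          simp only [hBdef, Set.mem_setOf_eq, Set.mem_empty_iff_false, iff_false]
          intro h
          obtain ⟨⟨hθ', hG⟩, ht, habs⟩ := h
          rw [hFeq, hQC] at habs
          simp only [Polynomial.map_C, Polynomial.eval_C] at habs
          have habs' : ‖G θ'‖ < y := habs
          linarith [hysqy, hG]
        rw [hBempty]
        simp
      · -- degree ≥ 1
        set ε : ℝ := y ^ (1/(2*(d:ℝ))) with hεdef
        have hdR : (0:ℝ) < (d:ℝ) := by exact_mod_cast hd1
        have hε0 : 0 < ε := Real.rpow_pos_of_pos hy _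
        have hεd : ε ^ d = sqy := by
          rw [hεdef, hsqydef, ← Real.rpow_natCast (y ^ (1/(2*(d:ℝ)))) d,
            ← Real.rpow_mul hy.le]
          congr 1
          field_simp
        have hεδ : ε ≤ y ^ δ := by
          rw [hεdef]
          apply Real.rpow_le_rpow_of_exponent_ge hy hy1.le
          calc δ ≤ 1/(2*(d:ℝ)+2) := min_le_right _ _
            _ ≤ 1/(2*(d:ℝ)) := by
              apply one_div_le_one_div_of_le (by linarith)
              linarith
        have hslice : ∀ θ' : Fin n → ℝ, volume ((fun t => (t, θ')) ⁻¹' B)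
            ≤ Ω.indicator (fun _ => ENNReal.ofReal (13 * d * ε)) θ' := by
          intro θ'
          by_cases hgood : θ' ∈ Ω ∧ sqy ≤ ‖G θ'‖
          · rw [Set.indicator_of_mem hgood.1]
            set q : Polynomial ℂ :=
              Q.map (MvPolynomial.eval (fun j => Complex.exp ((θ' j : ℂ) * Complex.I))) with hqdef
            have hGne : MvPolynomial.eval (fun j => Complex.exp ((θ' j : ℂ) * Complex.I)) L ≠ 0 := by
              intro h
              rw [hGdef] at hgood
              simp only at hgood
              rw [h] at hgood
              simp at hgood
              linarith [hgood.2, hsqy0]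
            have hqdeg : q.natDegree = d :=
              Polynomial.natDegree_map_of_leadingCoeff_ne_zero _ hGne
            have hqlc : q.leadingCoeff
                = MvPolynomial.eval (fun j => Complex.exp ((θ' j : ℂ) * Complex.I)) L :=
              Polynomial.leadingCoeff_map_of_leadingCoeff_ne_zero _ hGne
            have hsliceq : (fun t => (t, θ')) ⁻¹' B
                = {t : ℝ | t ∈ Set.Ioc 0 (2*π) ∧
                    ‖q.eval (Complex.exp ((t:ℂ) * Complex.I))‖ < y} := by
              ext t
              simp only [Set.mem_preimage, hBdef, Set.mem_setOf_eq]
              rw [hFeq]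
              constructor
              · rintro ⟨-, ht, habs⟩
                exact ⟨ht, habs⟩
              · rintro ⟨ht, habs⟩
                exact ⟨⟨hgood.1, hgood.2⟩, ht, habs⟩
            rw [hsliceq]
            have hyq : y ≤ ‖q.leadingCoeff‖ * ε ^ q.natDegree := by
              rw [hqlc, hqdeg, hεd]
              calc y = sqy * sqy := hsqysq.symm
                _ ≤ ‖MvPolynomial.eval
                      (fun j => Complex.exp ((θ' j : ℂ) * Complex.I)) L‖ * sqy := by
                    apply mul_le_mul_of_nonneg_right _ hsqy0.le
                    exact hgood.2
            have hbound := poly_slice_bound q (by rw [hqdeg]; exact hd1) hε0 hyq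
            rw [hqdeg] at hbound
            exact hbound
          · have : (fun t => (t, θ')) ⁻¹' B = ∅ := by
              ext t
              simp only [Set.mem_preimage, hBdef, Set.mem_setOf_eq, Set.mem_empty_iff_false,
                iff_false, not_and]
              tauto
            rw [this]
            simp
        calc (volume.prod volume) B
            = ∫⁻ θ', volume ((fun t => (t, θ')) ⁻¹' B) ∂volume :=
              Measure.prod_apply_symm hBmeas
          _ ≤ ∫⁻ θ', Ω.indicator (fun _ => ENNReal.ofReal (13 * d * ε)) θ' ∂volume :=
              lintegral_mono hslice
          _ = ENNReal.ofReal (13 * d * ε) * volume Ω := lintegral_indicator_const hΩmeas _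
          _ = ENNReal.ofReal (13 * d * ε) * ENNReal.ofReal ((2*π)^n) := by rw [hΩvol]
          _ = ENNReal.ofReal (13 * d * ε * (2*π)^n) := by
              rw [← ENNReal.ofReal_mul (by positivity)]
          _ ≤ ENNReal.ofReal ((2*π)^n * 13 * d * y ^ δ) := by
              apply ENNReal.ofReal_le_ofReal
              have h2πn : (0:ℝ) ≤ (2*π)^n := by positivity
              nlinarith [mul_le_mul_of_nonneg_left hεδ (by positivity : (0:ℝ) ≤ 13 * (d:ℝ) * (2*π)^n)]
    -- put everything together
    rw [hvolT]
    calc (volume.prod volume) T ≤ (volume.prod volume) (A ∪ B) := measure_mono hTsub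
      _ ≤ (volume.prod volume) A + (volume.prod volume) B := measure_union_le _ _
      _ ≤ ENNReal.ofReal (2*π*C' * y ^ δ) + ENNReal.ofReal ((2*π)^n * 13 * d * y ^ δ) :=
          add_le_add hvolA hvolB
      _ = ENNReal.ofReal (2*π*C' * y ^ δ + (2*π)^n * 13 * d * y ^ δ) := by
          rw [← ENNReal.ofReal_add (by positivity) (by positivity)]
      _ ≤ ENNReal.ofReal ((2*π*C' + (2*π)^n * 13 * d + 1) * y ^ δ) := by
          apply ENNReal.ofReal_le_ofReal
          nlinarith [hyδpos]
end

section
/- Let k ≥ 2 be an integer and let C_k > 0 be a constant such that μ_1({z ∈ 𝕋 : |Q(z)| < t}) ≤ C_k · t^{1/(k−1)} for every monic polynomial Q ∈ ℂ[x] with exactly k nonzero coefficients and every t > 0 (such a constant exists by Lawton's theorem). Then for every polynomial P ∈ ℂ[x] with exactly k nonzero coefficients, each of modulus ≥ 1, every integer ℓ ≥ 1 and every 0 < y ≤ 1: 0 ≤ (−1)^ℓ ∫_{S(P,y)} (log|P(x)|)^ℓ dx/x ≤ C_k · I_{ℓ,k}(y). -/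
open MeasureTheory Polynomial Real

/-- `S(P,y) = {z ∈ 𝕋 : |P(z)| < y}`. -/
def S1 (P : Polynomial ℂ) (y : ℝ) : Set ℂ :=
  {z : ℂ | ‖z‖ = 1 ∧ ‖P.eval z‖ < y}

/-- Arc-length measure on the unit circle, via the parametrization `θ ∈ (0,2π] ↦ e^{iθ}`. -/
noncomputable def mu1 (A : Set ℂ) : ENNReal :=
  volume {θ : ℝ | θ ∈ Set.Ioc (0:ℝ) (2*π) ∧ Complex.exp ((θ:ℂ) * Complex.I) ∈ A}

/-- `∫_A f(x) dx/x := ∫_0^{2π} 1_A(e^{iθ}) f(e^{iθ}) dθ`. -/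
noncomputable def circleIntOn (A : Set ℂ) (f : ℂ → ℝ) : ℝ :=
  ∫ θ in (0:ℝ)..(2*π), Set.indicator A f (Complex.exp ((θ:ℂ) * Complex.I))

/-- `J_{ℓ,δ}(y) := (−1)^ℓ δ ∫_0^y (log z)^ℓ z^{δ−1} dz`. -/
noncomputable def J (ℓ : ℕ) (δ y : ℝ) : ℝ :=
  (-1:ℝ)^ℓ * δ * ∫ z in (0:ℝ)..y, (Real.log z)^ℓ * z ^ (δ - 1)

/-- `I_{ℓ,k}(y) := J_{ℓ,1/(k−1)}(y)`. -/
noncomputable def Ifun (ℓ k : ℕ) (y : ℝ) : ℝ := J ℓ (1/((k:ℝ)-1)) y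

namespace SignedLogAux

lemma pow_lt_iff_rpow_lt (ℓ : ℕ) (hℓ : ℓ ≠ 0) {t b : ℝ} (ht : 0 < t) (hb : 0 ≤ b) :
    t < b ^ ℓ ↔ t ^ ((ℓ:ℝ)⁻¹) < b := by
  constructor
  · intro h
    have hℓpos : (0:ℝ) < ((ℓ:ℕ):ℝ)⁻¹ := by
      have : (0:ℝ) < (ℓ:ℝ) := by exact_mod_cast Nat.pos_of_ne_zero hℓ
      exact inv_pos.mpr this
    have h2 := Real.rpow_lt_rpow ht.le h hℓpos
    rwa [Real.pow_rpow_inv_natCast hb hℓ] at h2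
  · intro h
    have h2 := pow_lt_pow_left₀ h (Real.rpow_nonneg ht.le _) hℓ
    rwa [Real.rpow_inv_natCast_pow ht.le hℓ] at h2

lemma integrableOn_aux {δ : ℝ} (hδ : 0 < δ) {y : ℝ} (hy : 0 < y) (hy1 : y ≤ 1) (ℓ : ℕ) :
    IntegrableOn (fun z : ℝ => δ * z ^ (δ - 1) * (-Real.log z) ^ ℓ) (Set.Ioo 0 y) := by
  set ε : ℝ := δ / (2 * ℓ + 2) with hε
  have hεpos : 0 < ε := by positivity
  have hεℓ : ε * ℓ ≤ δ / 2 := by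
    rw [hε, div_mul_eq_mul_div, div_le_div_iff₀ (by positivity) (by norm_num)]
    nlinarith [hδ.le, (Nat.cast_nonneg ℓ : (0:ℝ) ≤ ℓ)]
  have he : (-1:ℝ) < δ - ε * ℓ - 1 := by nlinarith [hδ]
  have hg : IntegrableOn (fun z : ℝ => (δ / ε ^ ℓ) * z ^ (δ - ε * ℓ - 1)) (Set.Ioo 0 y) := by
    have h1 : IntervalIntegrable (fun z : ℝ => z ^ (δ - ε * ℓ - 1)) volume 0 y :=
      intervalIntegral.intervalIntegrable_rpow' he
    exact ((intervalIntegrable_iff_integrableOn_Ioo_of_le hy.le).mp h1).const_mul _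
  refine hg.mono' ?_ ?_
  · exact (((measurable_const.mul (by fun_prop : Measurable fun z : ℝ => z ^ (δ - 1)))).mul
      (Real.measurable_log.neg.pow_const ℓ)).aestronglyMeasurable
  · filter_upwards [ae_restrict_mem measurableSet_Ioo] with z hz
    obtain ⟨hz0, hzy⟩ := hz
    have hz1 : z ≤ 1 := le_of_lt (lt_of_lt_of_le hzy hy1)
    have hlognn : 0 ≤ -Real.log z := neg_nonneg.mpr (Real.log_nonpos hz0.le hz1)
    have hrnn : (0:ℝ) ≤ z ^ (δ - 1) := Real.rpow_nonneg hz0.le _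
    have hbound : -Real.log z ≤ z ^ (-ε) / ε := by
      have h3 := Real.log_le_rpow_div (x := z⁻¹) (by positivity) hεpos
      rwa [Real.log_inv, Real.inv_rpow hz0.le, ← Real.rpow_neg hz0.le] at h3
    have hpow : (-Real.log z) ^ ℓ ≤ (z ^ (-ε) / ε) ^ ℓ := pow_le_pow_left₀ hlognn hbound ℓ
    have hnorm : ‖δ * z ^ (δ - 1) * (-Real.log z) ^ ℓ‖ = δ * z ^ (δ - 1) * (-Real.log z) ^ ℓ := by
      rw [Real.norm_eq_abs, abs_of_nonneg]
      exact mul_nonneg (mul_nonneg hδ.le hrnn) (pow_nonneg hlognn ℓ)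
    rw [hnorm]
    have hle : δ * z ^ (δ - 1) * (-Real.log z) ^ ℓ ≤ δ * z ^ (δ - 1) * (z ^ (-ε) / ε) ^ ℓ :=
      mul_le_mul_of_nonneg_left hpow (mul_nonneg hδ.le hrnn)
    refine hle.trans (le_of_eq ?_)
    rw [div_pow, ← Real.rpow_natCast (z ^ (-ε)) ℓ, ← Real.rpow_mul hz0.le]
    have hzz : z ^ (δ - 1) * z ^ (-ε * (ℓ:ℝ)) = z ^ (δ - ε * ℓ - 1) := by
      rw [← Real.rpow_add hz0]; ring_nf
    field_simp
    rw [← hzz]; ring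

lemma key_lintegral {δ : ℝ} (hδ : 0 < δ) {y : ℝ} (hy : 0 < y) (hy1 : y ≤ 1)
    (ℓ : ℕ) (hℓ : ℓ ≠ 0) :
    ∫⁻ t in Set.Ioi (0:ℝ), ENNReal.ofReal ((min y (Real.exp (-(t ^ ((ℓ:ℝ)⁻¹))))) ^ δ)
      = ENNReal.ofReal (∫ z in Set.Ioo (0:ℝ) y, δ * z ^ (δ - 1) * (-Real.log z) ^ ℓ) := by
  set m : ℝ → ℝ := fun t => min y (Real.exp (-(t ^ ((ℓ:ℝ)⁻¹)))) with hm
  set K : Set (ℝ × ℝ) :=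
    {p | 0 < p.2 ∧ p.2 < y ∧ 0 < p.1 ∧ p.1 < (-Real.log p.2) ^ ℓ} with hK
  have hKmeas : MeasurableSet K := by
    have m1 : MeasurableSet {p : ℝ × ℝ | 0 < p.2} :=
      measurableSet_lt measurable_const measurable_snd
    have m2 : MeasurableSet {p : ℝ × ℝ | p.2 < y} :=
      measurableSet_lt measurable_snd measurable_const
    have m3 : MeasurableSet {p : ℝ × ℝ | 0 < p.1} :=
      measurableSet_lt measurable_const measurable_fst
    have m4 : MeasurableSet {p : ℝ × ℝ | p.1 < (-Real.log p.2) ^ ℓ} :=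
      measurableSet_lt measurable_fst
        (((Real.measurable_log.comp measurable_snd).neg).pow_const ℓ)
    exact m1.inter (m2.inter (m3.inter m4))
  set c : ℝ → ENNReal := fun z => ENNReal.ofReal (δ * z ^ (δ - 1)) with hc
  have hcmeas : Measurable fun p : ℝ × ℝ => c p.2 := by
    rw [hc]; fun_prop
  have hHmeas : Measurable (K.indicator fun p : ℝ × ℝ => c p.2) := hcmeas.indicator hKmeas
  have stepA : ∀ t ∈ Set.Ioi (0:ℝ),
      ENNReal.ofReal ((m t) ^ δ) = ∫⁻ z, K.indicator (fun p => c p.2) (t, z) := by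
    intro t ht
    rw [Set.mem_Ioi] at ht
    have hmt : 0 < m t := lt_min hy (Real.exp_pos _)
    have hslice : ∀ z : ℝ, K.indicator (fun p => c p.2) (t, z)
        = (Set.Ioo 0 (m t)).indicator c z := by
      intro z
      have hiff : (t, z) ∈ K ↔ z ∈ Set.Ioo 0 (m t) := by
        simp only [hK, Set.mem_setOf_eq, Set.mem_Ioo, hm, lt_min_iff]
        constructor
        · rintro ⟨hz0, hzy, -, hlt⟩
          have hlognn : 0 ≤ -Real.log z :=
            neg_nonneg.mpr (Real.log_nonpos hz0.le (hzy.trans_le hy1).le)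
          have h2 := (pow_lt_iff_rpow_lt ℓ hℓ ht hlognn).mp hlt
          refine ⟨hz0, hzy, ?_⟩
          rw [← Real.exp_log hz0]
          exact Real.exp_lt_exp.mpr (by linarith)
        · rintro ⟨hz0, hzy, hze⟩
          have h1 : Real.log z < -(t ^ ((ℓ:ℝ)⁻¹)) := (Real.log_lt_iff_lt_exp hz0).mpr hze
          have h0 : (0:ℝ) < t ^ ((ℓ:ℝ)⁻¹) := Real.rpow_pos_of_pos ht _
          exact ⟨hz0, hzy, ht, (pow_lt_iff_rpow_lt ℓ hℓ ht (by linarith)).mpr (by linarith)⟩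
      by_cases h : (t, z) ∈ K
      · rw [Set.indicator_of_mem h, Set.indicator_of_mem (hiff.mp h)]
      · rw [Set.indicator_of_notMem h,
          Set.indicator_of_notMem (fun hzz => h (hiff.mpr hzz))]
    rw [lintegral_congr hslice, lintegral_indicator measurableSet_Ioo]
    have hint : IntegrableOn (fun z : ℝ => δ * z ^ (δ - 1)) (Set.Ioo 0 (m t)) := by
      have h1 : IntervalIntegrable (fun z : ℝ => z ^ (δ - 1)) volume 0 (m t) :=
        intervalIntegral.intervalIntegrable_rpow' (by linarith)
      exact ((intervalIntegrable_iff_integrableOn_Ioo_of_le hmt.le).mp h1).const_mul δ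
    have hnn : 0 ≤ᵐ[volume.restrict (Set.Ioo (0:ℝ) (m t))] fun z : ℝ => δ * z ^ (δ - 1) := by
      filter_upwards [ae_restrict_mem measurableSet_Ioo] with z hz
      exact mul_nonneg hδ.le (Real.rpow_nonneg hz.1.le _)
    rw [hc, ← ofReal_integral_eq_lintegral_ofReal hint hnn]
    congr 1
    rw [← MeasureTheory.integral_Ioc_eq_integral_Ioo, ← intervalIntegral.integral_of_le hmt.le,
      intervalIntegral.integral_const_mul, integral_rpow (Or.inl (by linarith))]
    have h11 : δ - 1 + 1 = δ := by ring
    rw [h11, Real.zero_rpow hδ.ne', sub_zero]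
    field_simp
  rw [setLIntegral_congr_fun measurableSet_Ioi stepA]
  rw [lintegral_lintegral_swap (μ := volume.restrict (Set.Ioi (0:ℝ))) (ν := volume)
    (f := fun t z => K.indicator (fun p : ℝ × ℝ => c p.2) (t, z)) hHmeas.aemeasurable]
  have stepC : ∀ z : ℝ, (∫⁻ t in Set.Ioi (0:ℝ), K.indicator (fun p => c p.2) (t, z))
      = (Set.Ioo (0:ℝ) y).indicator
          (fun z => c z * ENNReal.ofReal ((-Real.log z) ^ ℓ)) z := by
    intro z
    by_cases hz : z ∈ Set.Ioo (0:ℝ) y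
    · have hslice : ∀ t : ℝ, K.indicator (fun p => c p.2) (t, z)
          = (Set.Ioo (0:ℝ) ((-Real.log z) ^ ℓ)).indicator (fun _ => c z) t := by
        intro t
        have hiff : (t, z) ∈ K ↔ t ∈ Set.Ioo (0:ℝ) ((-Real.log z) ^ ℓ) := by
          simp only [hK, Set.mem_setOf_eq, Set.mem_Ioo]
          exact ⟨fun h => ⟨h.2.2.1, h.2.2.2⟩, fun h => ⟨hz.1, hz.2, h.1, h.2⟩⟩
        by_cases h : (t, z) ∈ K
        · rw [Set.indicator_of_mem h, Set.indicator_of_mem (hiff.mp h)]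
        · rw [Set.indicator_of_notMem h,
            Set.indicator_of_notMem (fun hzz => h (hiff.mpr hzz))]
      rw [lintegral_congr hslice, lintegral_indicator measurableSet_Ioo, setLIntegral_const,
        Measure.restrict_apply measurableSet_Ioo,
        Set.inter_eq_left.mpr Set.Ioo_subset_Ioi_self, Real.volume_Ioo, sub_zero,
        Set.indicator_of_mem hz]
    · have h0 : ∀ t : ℝ, K.indicator (fun p => c p.2) (t, z) = 0 := fun t =>
        Set.indicator_of_notMem (fun hk => hz ⟨hk.1, hk.2.1⟩) _
      simp only [h0, lintegral_const, zero_mul, Set.indicator_of_notMem hz]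
  rw [lintegral_congr stepC, lintegral_indicator measurableSet_Ioo]
  have hae : ∀ᵐ z ∂(volume.restrict (Set.Ioo (0:ℝ) y)),
      c z * ENNReal.ofReal ((-Real.log z) ^ ℓ)
        = ENNReal.ofReal (δ * z ^ (δ - 1) * (-Real.log z) ^ ℓ) := by
    filter_upwards [ae_restrict_mem measurableSet_Ioo] with z hz
    rw [hc, ← ENNReal.ofReal_mul (mul_nonneg hδ.le (Real.rpow_nonneg hz.1.le _))]
  rw [lintegral_congr_ae hae,
    ← ofReal_integral_eq_lintegral_ofReal (integrableOn_aux hδ hy hy1 ℓ) ?_]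
  filter_upwards [ae_restrict_mem measurableSet_Ioo] with z hz
  have hlognn : 0 ≤ -Real.log z :=
    neg_nonneg.mpr (Real.log_nonpos hz.1.le (hz.2.trans_le hy1).le)
  exact mul_nonneg (mul_nonneg hδ.le (Real.rpow_nonneg hz.1.le _)) (pow_nonneg hlognn ℓ)

end SignedLogAux

/-- Given Lawton's constant `C_k` for polynomials with `k` nonzero coefficients, for every
polynomial `P` with exactly `k ≥ 2` nonzero coefficients, each of modulus `≥ 1`, every `ℓ ≥ 1`
and every `0 < y ≤ 1`: `0 ≤ (−1)^ℓ ∫_{S(P,y)} (log|P(x)|)^ℓ dx/x ≤ C_k · I_{ℓ,k}(y)`. -/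
theorem signed_log_power_integral_bound (k : ℕ) (hk : 2 ≤ k) (C : ℝ) (hC : 0 < C)
    (hLawton : ∀ Q : Polynomial ℂ, Q.Monic → Q.support.card = k → ∀ t : ℝ, 0 < t →
      mu1 (S1 Q t) ≤ ENNReal.ofReal (C * t ^ ((1:ℝ)/((k:ℝ)-1))))
    (P : Polynomial ℂ) (hsupp : P.support.card = k)
    (hcoeff : ∀ i ∈ P.support, 1 ≤ ‖P.coeff i‖)
    (ℓ : ℕ) (hℓ : 1 ≤ ℓ) (y : ℝ) (hy : 0 < y) (hy1 : y ≤ 1) :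
    0 ≤ (-1:ℝ)^ℓ *
        circleIntOn (S1 P y) (fun z => (Real.log ‖P.eval z‖)^ℓ) ∧
      (-1:ℝ)^ℓ *
        circleIntOn (S1 P y) (fun z => (Real.log ‖P.eval z‖)^ℓ)
        ≤ C * Ifun ℓ k y := by
  classical
  set δ : ℝ := (1:ℝ)/((k:ℝ)-1) with hδdef
  have hk1 : (1:ℝ) ≤ (k:ℝ) - 1 := by
    have : (2:ℝ) ≤ (k:ℝ) := by exact_mod_cast hk
    linarith
  have hδpos : 0 < δ := by rw [hδdef]; positivity
  have hℓ0 : ℓ ≠ 0 := by omega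
  have hπ : (0:ℝ) ≤ 2*π := by positivity
  have hP0 : P ≠ 0 := by
    intro h
    rw [h] at hsupp
    simp at hsupp
    omega
  -- the monic renormalization
  have haS : P.natDegree ∈ P.support := Polynomial.natDegree_mem_support_of_nonzero hP0
  have ha1 : 1 ≤ ‖P.leadingCoeff‖ := hcoeff _ haS
  have ha0 : P.leadingCoeff ≠ 0 := Polynomial.leadingCoeff_ne_zero.mpr hP0
  set Q : Polynomial ℂ := Polynomial.C P.leadingCoeff⁻¹ * P with hQdef
  have hQm : Q.Monic := by
    unfold Polynomial.Monic
    rw [hQdef, Polynomial.leadingCoeff_mul, Polynomial.leadingCoeff_C,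
      inv_mul_cancel₀ ha0]
  have hQsupp : Q.support = P.support := by
    ext i
    have hco : Q.coeff i = P.leadingCoeff⁻¹ * P.coeff i := by
      rw [hQdef, Polynomial.coeff_C_mul]
    simp [Polynomial.mem_support_iff, hco, ha0]
  have hQev : ∀ z : ℂ, ‖Q.eval z‖ ≤ ‖P.eval z‖ := by
    intro z
    rw [hQdef, Polynomial.eval_mul, Polynomial.eval_C, norm_mul, norm_inv]
    calc ‖P.leadingCoeff‖⁻¹ * ‖P.eval z‖
        ≤ 1 * ‖P.eval z‖ := by
          apply mul_le_mul_of_nonneg_right _ (norm_nonneg _)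
          exact inv_le_one_of_one_le₀ ha1
      _ = ‖P.eval z‖ := one_mul _
  have hmuP : ∀ t : ℝ, 0 < t → mu1 (S1 P t) ≤ ENNReal.ofReal (C * t ^ δ) := by
    intro t ht
    refine le_trans ?_ (hLawton Q hQm (by rw [hQsupp, hsupp]) t ht)
    unfold mu1
    apply measure_mono
    rintro θ ⟨h1, h2⟩
    exact ⟨h1, h2.1, lt_of_le_of_lt (hQev _) h2.2⟩
  -- the parametrized modulus
  set w : ℝ → ℝ := fun θ => ‖P.eval (Complex.exp ((θ:ℂ) * Complex.I))‖ with hwdef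
  have hw_cont : Continuous w := by
    rw [hwdef]
    exact continuous_norm.comp (by fun_prop)
  set f : ℂ → ℝ := fun z => (-Real.log ‖P.eval z‖)^ℓ with hfdef
  set F : ℝ → ℝ := fun θ => Set.indicator (S1 P y) f (Complex.exp ((θ:ℂ) * Complex.I)) with hFdef
  have hF_eq : F = Set.indicator {θ' : ℝ | w θ' < y} (fun θ' => (-Real.log (w θ'))^ℓ) := by
    funext θ
    simp [hFdef, Set.indicator_apply, S1, Complex.norm_exp_ofReal_mul_I, hfdef, hwdef]
  have hFm : Measurable F := by
    rw [hF_eq]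
    exact ((Real.measurable_log.comp hw_cont.measurable).neg.pow_const ℓ).indicator
      (measurableSet_lt hw_cont.measurable measurable_const)
  have hFnn : ∀ θ, 0 ≤ F θ := by
    intro θ
    apply Set.indicator_nonneg
    intro z hz
    exact pow_nonneg (neg_nonneg.mpr (Real.log_nonpos (norm_nonneg _)
      (le_of_lt (lt_of_lt_of_le hz.2 hy1)))) ℓ
  have key_eq : (-1:ℝ)^ℓ *
      circleIntOn (S1 P y) (fun z => (Real.log ‖P.eval z‖)^ℓ)
      = ∫ θ in (0:ℝ)..(2*π), F θ := by
    unfold circleIntOn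
    rw [← intervalIntegral.integral_const_mul]
    apply intervalIntegral.integral_congr
    intro θ _
    simp only [hFdef, hfdef]
    rw [← Set.indicator_const_mul]
    congr 1
    funext z
    rw [neg_pow (Real.log ‖P.eval z‖) ℓ]
  constructor
  · rw [key_eq]
    exact intervalIntegral.integral_nonneg hπ (fun u _ => hFnn u)
  -- upper bound
  set ν : Measure ℝ := volume.restrict (Set.Ioc (0:ℝ) (2*π)) with hνdef
  have step1 : ∫ θ in (0:ℝ)..(2*π), F θ = (∫⁻ θ, ENNReal.ofReal (F θ) ∂ν).toReal := by
    rw [intervalIntegral.integral_of_le hπ,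
      integral_eq_lintegral_of_nonneg_ae (Filter.Eventually.of_forall hFnn)
        hFm.aestronglyMeasurable]
  set m : ℝ → ℝ := fun t => min y (Real.exp (-(t ^ ((ℓ:ℝ)⁻¹)))) with hmdef
  have hm_pos : ∀ t, 0 < m t := fun t => lt_min hy (Real.exp_pos _)
  have step2 : ∫⁻ θ, ENNReal.ofReal (F θ) ∂ν
      = ∫⁻ t in Set.Ioi (0:ℝ), ν {θ | t < F θ} :=
    lintegral_eq_lintegral_meas_lt ν (Filter.Eventually.of_forall hFnn) hFm.aemeasurable
  have step3 : ∀ t ∈ Set.Ioi (0:ℝ), ν {θ | t < F θ} ≤ ENNReal.ofReal (C * (m t) ^ δ) := by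
    intro t ht
    rw [Set.mem_Ioi] at ht
    have hsub : {θ : ℝ | t < F θ} ∩ Set.Ioc 0 (2*π)
        ⊆ {θ : ℝ | θ ∈ Set.Ioc (0:ℝ) (2*π) ∧ Complex.exp ((θ:ℂ) * Complex.I) ∈ S1 P (m t)} := by
      rintro θ ⟨h1, h2⟩
      refine ⟨h2, ?_⟩
      rw [Set.mem_setOf_eq] at h1
      by_cases hmem : Complex.exp ((θ:ℂ) * Complex.I) ∈ S1 P y
      swap
      · rw [hFdef] at h1
        simp only [Set.indicator_of_notMem hmem] at h1
        linarith
      have hval : t < (-Real.log (w θ))^ℓ := by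
        rw [hFdef] at h1
        simpa [Set.indicator_of_mem hmem, hfdef, hwdef] using h1
      have hwy : w θ < y := hmem.2
      have hwnn : 0 ≤ -Real.log (w θ) :=
        neg_nonneg.mpr (Real.log_nonpos (norm_nonneg _) (hwy.trans_le hy1).le)
      have h2' : t ^ ((ℓ:ℝ)⁻¹) < -Real.log (w θ) :=
        (SignedLogAux.pow_lt_iff_rpow_lt ℓ hℓ0 ht hwnn).mp hval
      have hs : 0 < t ^ ((ℓ:ℝ)⁻¹) := Real.rpow_pos_of_pos ht _
      have hwpos : 0 < w θ := by
        have hw0 : 0 ≤ w θ := norm_nonneg _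
        rcases hw0.eq_or_lt with h | h
        · exfalso
          rw [← h, Real.log_zero, neg_zero] at h2'
          linarith
        · exact h
      have hwe : w θ < Real.exp (-(t ^ ((ℓ:ℝ)⁻¹))) := by
        rw [← Real.exp_log hwpos]
        exact Real.exp_lt_exp.mpr (by linarith)
      exact ⟨hmem.1, lt_min hwy hwe⟩
    calc ν {θ | t < F θ} = volume ({θ : ℝ | t < F θ} ∩ Set.Ioc 0 (2*π)) :=
          Measure.restrict_apply' measurableSet_Ioc
      _ ≤ mu1 (S1 P (m t)) := measure_mono hsub
      _ ≤ ENNReal.ofReal (C * (m t) ^ δ) := hmuP _ (hm_pos t)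
  have hIval : ∫ z in Set.Ioo (0:ℝ) y, δ * z ^ (δ - 1) * (-Real.log z) ^ ℓ = Ifun ℓ k y := by
    unfold Ifun J
    rw [← hδdef, ← MeasureTheory.integral_Ioc_eq_integral_Ioo,
      ← intervalIntegral.integral_of_le hy.le]
    rw [← intervalIntegral.integral_const_mul]
    apply intervalIntegral.integral_congr
    intro z _
    simp only []
    ring
  have hIfun_nn : 0 ≤ Ifun ℓ k y := by
    rw [← hIval]
    rw [← MeasureTheory.integral_Ioc_eq_integral_Ioo, ← intervalIntegral.integral_of_le hy.le]
    apply intervalIntegral.integral_nonneg hy.le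
    intro u hu
    have hlognn : 0 ≤ -Real.log u :=
      neg_nonneg.mpr (Real.log_nonpos hu.1 (hu.2.trans hy1))
    exact mul_nonneg (mul_nonneg hδpos.le (Real.rpow_nonneg hu.1 _)) (pow_nonneg hlognn ℓ)
  rw [key_eq, step1]
  apply ENNReal.toReal_le_of_le_ofReal (mul_nonneg hC.le hIfun_nn)
  calc ∫⁻ θ, ENNReal.ofReal (F θ) ∂ν
      = ∫⁻ t in Set.Ioi (0:ℝ), ν {θ | t < F θ} := step2
    _ ≤ ∫⁻ t in Set.Ioi (0:ℝ), ENNReal.ofReal (C * (m t) ^ δ) := by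
        apply lintegral_mono_ae
        filter_upwards [ae_restrict_mem measurableSet_Ioi] with t ht
        exact step3 t ht
    _ = ∫⁻ t in Set.Ioi (0:ℝ), ENNReal.ofReal C * ENNReal.ofReal ((m t) ^ δ) := by
        apply lintegral_congr
        intro t
        rw [ENNReal.ofReal_mul hC.le]
    _ = ENNReal.ofReal C * ∫⁻ t in Set.Ioi (0:ℝ), ENNReal.ofReal ((m t) ^ δ) :=
        lintegral_const_mul' _ _ ENNReal.ofReal_ne_top
    _ = ENNReal.ofReal C *
        ENNReal.ofReal (∫ z in Set.Ioo (0:ℝ) y, δ * z ^ (δ - 1) * (-Real.log z) ^ ℓ) := by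
        rw [SignedLogAux.key_lintegral hδpos hy hy1 ℓ hℓ0]
    _ = ENNReal.ofReal (C * Ifun ℓ k y) := by
        rw [hIval, ← ENNReal.ofReal_mul hC.le]
end

section
/- Let s ≥ 1 be an integer, let P_1,…,P_s ∈ ℂ[x] be polynomials with exactly k_1,…,k_s ≥ 2 nonzero coefficients respectively, and suppose C_1,…,C_s > 0 are constants with μ_1(S(P_i,t)) ≤ C_i · t^{1/(k_i−1)} for all t > 0 and all i. Then for all 0 < y_1,…,y_s ≤ 1: 0 ≤ (−1)^s ∫_{S(P_1,y_1) ∩ ⋯ ∩ S(P_s,y_s)} log|P_1(x)| ⋯ log|P_s(x)| dx/x ≤ ( C_1 · I_{s,k_1}(y_1) ⋯ C_s · I_{s,k_s}(y_s) )^{1/s}. -/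
open MeasureTheory Polynomial Real
open Set Filter

section Aux

lemma aux_integrable (n : ℕ) {δ : ℝ} (hδ : 0 < δ) {c : ℝ} (hc : 0 ≤ c) :
    IntegrableOn (fun t : ℝ => t ^ n * Real.exp (-δ * t)) (Set.Ioi c) := by
  have h := integrableOn_rpow_mul_exp_neg_mul_rpow (p := 1) (s := (n : ℝ))
    (lt_of_lt_of_le (by norm_num) (Nat.cast_nonneg n)) one_pos hδ
  have h2 : IntegrableOn (fun t : ℝ => t ^ n * Real.exp (-δ * t)) (Set.Ioi 0) := by
    refine h.congr_fun (fun x hx => ?_) measurableSet_Ioi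
    simp only [Real.rpow_natCast, Real.rpow_one]
  exact h2.mono_set (Set.Ioi_subset_Ioi hc)

lemma aux_tendsto (n : ℕ) {δ : ℝ} (hδ : 0 < δ) :
    Tendsto (fun t : ℝ => t ^ n * Real.exp (-δ * t)) atTop (nhds 0) := by
  have h1 : Tendsto (fun t : ℝ => δ * t) atTop atTop :=
    Tendsto.const_mul_atTop hδ tendsto_id
  have h2 := (tendsto_pow_mul_exp_neg_atTop_nhds_zero n).comp h1
  have h3 := h2.const_mul ((1:ℝ)/δ^n)
  rw [mul_zero] at h3
  refine h3.congr fun t => ?_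
  simp only [Function.comp_apply, mul_pow]
  field_simp

lemma aux_ibp (s : ℕ) (hs : 1 ≤ s) {δ : ℝ} (hδ : 0 < δ) {c : ℝ} (hc : 0 ≤ c) :
    δ * ∫ t in Set.Ioi c, t ^ s * Real.exp (-δ * t)
      = Real.exp (-δ * c) * c ^ s
        + s * ∫ t in Set.Ioi c, t ^ (s-1) * Real.exp (-δ * t) := by
  set F' : ℝ → ℝ := fun x =>
    (s:ℝ) * (x ^ (s-1) * Real.exp (-δ * x)) - δ * (x ^ s * Real.exp (-δ * x)) with hF'
  have hderiv : ∀ x ∈ Set.Ici c, HasDerivAt (fun t : ℝ => t ^ s * Real.exp (-δ * t)) (F' x) x := by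
    intro x _
    have h1 : HasDerivAt (fun t : ℝ => t ^ s) ((s:ℝ) * x ^ (s-1)) x := hasDerivAt_pow s x
    have h2 : HasDerivAt (fun t : ℝ => Real.exp (-δ * t)) (Real.exp (-δ * x) * (-δ * 1)) x :=
      HasDerivAt.exp ((hasDerivAt_id x).const_mul (-δ))
    have h3 := h1.mul h2
    exact h3.congr_deriv (by rw [hF']; ring)
  have hint : IntegrableOn F' (Set.Ioi c) := by
    exact (((aux_integrable (s-1) hδ hc).const_mul (s:ℝ)).sub
      ((aux_integrable s hδ hc).const_mul δ))
  have hten : Tendsto (fun t : ℝ => t ^ s * Real.exp (-δ * t)) atTop (nhds 0) := aux_tendsto s hδ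
  have key := integral_Ioi_of_hasDerivAt_of_tendsto' hderiv hint hten
  have e1 : ∫ a in Set.Ioi c, (s:ℝ) * (a ^ (s-1) * Real.exp (-δ * a))
      = (s:ℝ) * ∫ a in Set.Ioi c, a ^ (s-1) * Real.exp (-δ * a) := by
    simp only [← smul_eq_mul]
    exact integral_smul (μ := volume.restrict (Set.Ioi c)) (s:ℝ) _
  have e2 : ∫ a in Set.Ioi c, δ * (a ^ s * Real.exp (-δ * a))
      = δ * ∫ a in Set.Ioi c, a ^ s * Real.exp (-δ * a) := by
    simp only [← smul_eq_mul]
    exact integral_smul (μ := volume.restrict (Set.Ioi c)) δ _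
  have hsplit : ∫ x in Set.Ioi c, F' x
      = (s:ℝ) * (∫ t in Set.Ioi c, t ^ (s-1) * Real.exp (-δ * t))
        - δ * ∫ t in Set.Ioi c, t ^ s * Real.exp (-δ * t) := by
    rw [hF', integral_sub (((aux_integrable (s-1) hδ hc).const_mul (s:ℝ)))
      (((aux_integrable s hδ hc).const_mul δ)), e1, e2]
  rw [hsplit] at key
  have hc2 : Real.exp (-δ * c) * c ^ s = c ^ s * Real.exp (-δ * c) := by ring
  rw [hc2]
  linear_combination -key

lemma aux_J_eq (s : ℕ) {δ y : ℝ} (hδ : 0 < δ) (hy : 0 < y) :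
    J s δ y = δ * ∫ t in Set.Ioi (-Real.log y), t ^ s * Real.exp (-δ * t) := by
  have himg : (fun t : ℝ => Real.exp (-t)) '' Set.Ioi (-Real.log y) = Set.Ioo 0 y := by
    ext z
    constructor
    · rintro ⟨t, ht, rfl⟩
      refine ⟨Real.exp_pos _, ?_⟩
      rw [← Real.exp_log hy]
      exact Real.exp_lt_exp.mpr (by linarith [Set.mem_Ioi.mp ht])
    · rintro ⟨hz0, hzy⟩
      exact ⟨-Real.log z, by simpa using Real.log_lt_log hz0 hzy,
        by simp [Real.exp_log hz0]⟩
  have hderiv : ∀ x ∈ Set.Ioi (-Real.log y),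
      HasDerivWithinAt (fun t : ℝ => Real.exp (-t)) (-Real.exp (-x)) (Set.Ioi (-Real.log y)) x := by
    intro x _
    have h : HasDerivAt (fun t : ℝ => Real.exp (-t)) (Real.exp (-x) * (-1)) x :=
      HasDerivAt.exp (hasDerivAt_neg x)
    simpa [mul_neg_one] using h.hasDerivWithinAt
  have hinj : Set.InjOn (fun t : ℝ => Real.exp (-t)) (Set.Ioi (-Real.log y)) := fun a _ b _ hab =>
    neg_injective (Real.exp_injective hab)
  have hcv := integral_image_eq_integral_abs_deriv_smul measurableSet_Ioi hderiv hinj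
    (fun z => (Real.log z)^s * z ^ (δ - 1))
  rw [himg] at hcv
  have hrhs : ∫ x in Set.Ioi (-Real.log y),
      |(-Real.exp (-x))| • ((Real.log (Real.exp (-x)))^s * (Real.exp (-x)) ^ (δ - 1))
      = (-1:ℝ)^s * ∫ t in Set.Ioi (-Real.log y), t ^ s * Real.exp (-δ * t) := by
    rw [← smul_eq_mul, ← integral_smul]
    apply setIntegral_congr_fun measurableSet_Ioi
    intro x _
    simp only []
    show |(-Real.exp (-x))| • ((Real.log (Real.exp (-x)))^s * (Real.exp (-x)) ^ (δ - 1))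
        = (-1:ℝ)^s • (x ^ s * Real.exp (-δ * x))
    have h1 : |(-Real.exp (-x))| = Real.exp (-x) := by
      rw [abs_neg, abs_of_pos (Real.exp_pos _)]
    have h2 : (Real.exp (-x)) ^ (δ - 1) = Real.exp (-x * (δ - 1)) := by
      rw [Real.rpow_def_of_pos (Real.exp_pos _), Real.log_exp]
    rw [h1, Real.log_exp, h2]
    have h3 : (-x)^s = (-1:ℝ)^s * x^s := by rw [neg_pow]
    simp only [smul_eq_mul]
    rw [h3, show -δ*x = -x + -x*(δ-1) by ring, Real.exp_add]
    ring
  have hJ : J s δ y = (-1:ℝ)^s * δ * ∫ z in Set.Ioo 0 y, (Real.log z)^s * z ^ (δ - 1) := by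
    rw [J, intervalIntegral.integral_of_le hy.le, integral_Ioc_eq_integral_Ioo]
  rw [hJ, hcv, hrhs]
  have h11 : ((-1:ℝ)^s) * ((-1:ℝ)^s) = 1 := by rw [← mul_pow]; norm_num
  linear_combination (δ * (∫ t in Set.Ioi (-Real.log y), t ^ s * Real.exp (-δ * t))) * h11

lemma aux_phi_cont {δ y : ℝ} (hδ : 0 < δ) (n : ℕ) :
    Continuous (fun t : ℝ => (min y (Real.exp (-t)))^δ * t^n) := by
  refine Continuous.mul ?_ (continuous_pow n)
  refine Continuous.rpow_const ?_ (fun x => Or.inr hδ.le)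
  exact continuous_const.min (Real.continuous_exp.comp continuous_neg)

lemma aux_phi_integral (s : ℕ) (hs : 1 ≤ s) {δ y : ℝ} (hδ : 0 < δ) (hy : 0 < y) (hy1 : y ≤ 1) :
    (s:ℝ) * ∫ t in Set.Ioi (0:ℝ), (min y (Real.exp (-t)))^δ * t^(s-1) = J s δ y := by
  set t0 : ℝ := -Real.log y with ht0def
  have ht0 : 0 ≤ t0 := by
    simp only [ht0def, neg_nonneg]
    exact Real.log_nonpos hy.le hy1
  have hexpt0 : Real.exp (-t0) = y := by rw [ht0def, neg_neg, Real.exp_log hy]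
  have hyδ : Real.exp (-δ * t0) = y ^ δ := by
    rw [Real.rpow_def_of_pos hy, ht0def]; ring_nf
  -- integrability pieces
  have hint2 : IntegrableOn (fun t : ℝ => (min y (Real.exp (-t)))^δ * t^(s-1)) (Set.Ioi t0) := by
    refine (aux_integrable (s-1) hδ ht0).congr_fun (fun x hx => ?_) measurableSet_Ioi
    have hx' : Real.exp (-x) < y := by
      rw [← hexpt0]
      exact Real.exp_lt_exp.mpr (by simpa using (Set.mem_Ioi.mp hx))
    rw [min_eq_right hx'.le, Real.rpow_def_of_pos (Real.exp_pos _), Real.log_exp]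
    ring_nf
  have hint1 : IntegrableOn (fun t : ℝ => (min y (Real.exp (-t)))^δ * t^(s-1)) (Set.Ioc 0 t0) :=
    (aux_phi_cont hδ (s-1)).integrableOn_Ioc
  -- split
  have hsplit : ∫ t in Set.Ioi (0:ℝ), (min y (Real.exp (-t)))^δ * t^(s-1)
      = (∫ t in Set.Ioc 0 t0, (min y (Real.exp (-t)))^δ * t^(s-1))
        + ∫ t in Set.Ioi t0, (min y (Real.exp (-t)))^δ * t^(s-1) := by
    rw [← Set.Ioc_union_Ioi_eq_Ioi ht0]
    exact setIntegral_union (Set.Ioc_disjoint_Ioi le_rfl) measurableSet_Ioi hint1 hint2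
  -- first piece
  have hp1 : ∫ t in Set.Ioc 0 t0, (min y (Real.exp (-t)))^δ * t^(s-1)
      = y ^ δ * (t0 ^ s / s) := by
    have e1 : ∫ t in Set.Ioc 0 t0, (min y (Real.exp (-t)))^δ * t^(s-1)
        = ∫ t in Set.Ioc 0 t0, y ^ δ * t^(s-1) := by
      apply setIntegral_congr_fun measurableSet_Ioc
      intro x hx
      have : y ≤ Real.exp (-x) := by
        rw [← hexpt0]
        exact Real.exp_le_exp.mpr (by linarith [hx.2])
      simp [min_eq_left this]
    rw [e1]
    have e2 : ∫ t in Set.Ioc 0 t0, y ^ δ * t^(s-1)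
        = y ^ δ * ∫ t in Set.Ioc 0 t0, t^(s-1) := by
      simp only [← smul_eq_mul]
      exact integral_smul (μ := volume.restrict (Set.Ioc 0 t0)) _ _
    rw [e2]
    congr 1
    rw [← intervalIntegral.integral_of_le ht0, integral_pow]
    rw [Nat.sub_add_cancel hs]
    have : ((s-1 : ℕ) : ℝ) + 1 = s := by
      rw [Nat.cast_sub hs]; push_cast; ring
    rw [this, zero_pow (by omega : s ≠ 0), sub_zero]
  -- second piece
  have hp2 : ∫ t in Set.Ioi t0, (min y (Real.exp (-t)))^δ * t^(s-1)
      = ∫ t in Set.Ioi t0, t^(s-1) * Real.exp (-δ * t) := by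
    apply setIntegral_congr_fun measurableSet_Ioi
    intro x hx
    have hx' : Real.exp (-x) < y := by
      rw [← hexpt0]
      exact Real.exp_lt_exp.mpr (by simpa using (Set.mem_Ioi.mp hx))
    show (min y (Real.exp (-x)))^δ * x^(s-1) = x^(s-1) * Real.exp (-δ*x)
    rw [min_eq_right hx'.le, Real.rpow_def_of_pos (Real.exp_pos _), Real.log_exp]
    ring_nf
  have hibp := aux_ibp s hs hδ ht0
  rw [aux_J_eq s hδ hy, ← ht0def, hsplit, hp1, hp2, hibp, hyδ]
  have hs' : (s:ℝ) ≠ 0 := Nat.cast_ne_zero.mpr (by omega)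
  field_simp

lemma aux_layer (s : ℕ) (hs : 1 ≤ s) {δ : ℝ} (hδ : 0 < δ)
    {C y : ℝ} (hC : 0 ≤ C) (hy : 0 < y) (hy1 : y ≤ 1)
    {f : ℝ → ℝ} (hf : Measurable f) (hfnn : ∀ θ, 0 ≤ f θ)
    (μ0 : Measure ℝ) [SigmaFinite μ0]
    (hbound : ∀ t : ℝ, 0 < t →
      μ0 {a | t < f a} ≤ ENNReal.ofReal (C * (min y (Real.exp (-t))) ^ δ)) :
    ∫⁻ a, ENNReal.ofReal (f a) ^ s ∂μ0 ≤ ENNReal.ofReal (C * J s δ y) := by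
  have h1 : ∀ a, ENNReal.ofReal (f a) ^ s = ENNReal.ofReal (f a ^ ((s:ℕ):ℝ)) := by
    intro a
    rw [Real.rpow_natCast, ENNReal.ofReal_pow (hfnn a)]
  simp_rw [h1]
  rw [lintegral_rpow_eq_lintegral_meas_lt_mul μ0 (Filter.Eventually.of_forall hfnn)
    hf.aemeasurable (by exact_mod_cast (by omega : 0 < s) : (0:ℝ) < (s:ℕ))]
  -- bound inner integral
  have step : ∫⁻ t in Set.Ioi (0:ℝ), μ0 {a | t < f a} * ENNReal.ofReal (t ^ (((s:ℕ):ℝ) - 1))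
      ≤ ∫⁻ t in Set.Ioi (0:ℝ), ENNReal.ofReal ((C * (min y (Real.exp (-t))) ^ δ) * t ^ (s-1:ℕ)) := by
    apply setLIntegral_mono' measurableSet_Ioi
    intro t ht
    have ht' : (0:ℝ) < t := ht
    have hpow : t ^ (((s:ℕ):ℝ) - 1) = t ^ (s-1:ℕ) := by
      rw [← Real.rpow_natCast t (s-1)]
      congr 1
      rw [Nat.cast_sub hs]
      push_cast; ring
    rw [hpow, ENNReal.ofReal_mul (by positivity)]
    exact mul_le_mul_left (hbound t ht') _
  have hmin_nonneg : ∀ t : ℝ, 0 ≤ min y (Real.exp (-t)) := fun t =>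
    le_min hy.le (Real.exp_pos _).le
  -- integrability of the bounding function
  have hint : IntegrableOn (fun t : ℝ => (C * (min y (Real.exp (-t))) ^ δ) * t ^ (s-1:ℕ))
      (Set.Ioi (0:ℝ)) := by
    refine Integrable.mono' ((aux_integrable (s-1) hδ le_rfl).const_mul C) ?_ ?_
    · have hc0 : Continuous fun t : ℝ => (min y (Real.exp (-t)))^δ :=
        Continuous.rpow_const (continuous_const.min (Real.continuous_exp.comp continuous_neg))
          (fun x => Or.inr hδ.le)
      exact ((continuous_const.mul hc0).mul (continuous_pow (s-1))).aestronglyMeasurable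
    · refine (ae_restrict_iff' measurableSet_Ioi).mpr (Filter.Eventually.of_forall ?_)
      intro t ht
      have ht' : (0:ℝ) < t := ht
      rw [Real.norm_eq_abs, abs_of_nonneg (by positivity)]
      have hm : (min y (Real.exp (-t))) ^ δ ≤ Real.exp (-δ * t) := by
        calc (min y (Real.exp (-t))) ^ δ ≤ (Real.exp (-t)) ^ δ :=
              Real.rpow_le_rpow (hmin_nonneg t) (min_le_right _ _) hδ.le
          _ = Real.exp (-δ * t) := by
              rw [Real.rpow_def_of_pos (Real.exp_pos _), Real.log_exp]; ring_nf
      calc C * (min y (Real.exp (-t))) ^ δ * t ^ (s-1:ℕ)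
          ≤ C * Real.exp (-δ * t) * t ^ (s-1:ℕ) := by
            apply mul_le_mul_of_nonneg_right (mul_le_mul_of_nonneg_left hm hC) (by positivity)
        _ = C * (t ^ (s-1:ℕ) * Real.exp (-δ * t)) := by ring
  -- convert to a real integral
  have hofReal : ∫⁻ t in Set.Ioi (0:ℝ),
        ENNReal.ofReal ((C * (min y (Real.exp (-t))) ^ δ) * t ^ (s-1:ℕ))
      = ENNReal.ofReal (∫ t in Set.Ioi (0:ℝ), (C * (min y (Real.exp (-t))) ^ δ) * t ^ (s-1:ℕ)) := by
    rw [ofReal_integral_eq_lintegral_ofReal hint]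
    refine (ae_restrict_iff' measurableSet_Ioi).mpr (Filter.Eventually.of_forall ?_)
    intro t ht
    have ht' : (0:ℝ) < t := ht
    positivity
  calc ENNReal.ofReal ((s:ℕ):ℝ) * ∫⁻ t in Set.Ioi (0:ℝ),
        μ0 {a | t < f a} * ENNReal.ofReal (t ^ (((s:ℕ):ℝ) - 1))
      ≤ ENNReal.ofReal ((s:ℕ):ℝ) * ENNReal.ofReal
          (∫ t in Set.Ioi (0:ℝ), (C * (min y (Real.exp (-t))) ^ δ) * t ^ (s-1:ℕ)) := by
        rw [← hofReal]; exact mul_le_mul_right step _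
    _ = ENNReal.ofReal (C * J s δ y) := by
        rw [← ENNReal.ofReal_mul (by positivity)]
        congr 1
        have e1 : ∫ t in Set.Ioi (0:ℝ), (C * (min y (Real.exp (-t))) ^ δ) * t ^ (s-1:ℕ)
            = C * ∫ t in Set.Ioi (0:ℝ), (min y (Real.exp (-t))) ^ δ * t ^ (s-1:ℕ) := by
          have hsm := integral_smul (μ := volume.restrict (Set.Ioi (0:ℝ))) C
            (fun t => (min y (Real.exp (-t))) ^ δ * t ^ (s-1:ℕ))
          simp only [smul_eq_mul] at hsm
          rw [← hsm]
          apply setIntegral_congr_fun measurableSet_Ioi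
          intro t _
          show C * (min y (Real.exp (-t))) ^ δ * t ^ (s-1:ℕ)
              = C * ((min y (Real.exp (-t))) ^ δ * t ^ (s-1:ℕ))
          ring
        rw [e1, ← aux_phi_integral s hs hδ hy hy1]
        ring

end Aux

/-- Bound for the product of logs integrated over `S(P_1,y_1) ∩ ⋯ ∩ S(P_s,y_s)`. -/
theorem product_log_integral_intersection_bound
    (s : ℕ) (hs : 1 ≤ s)
    (P : Fin s → Polynomial ℂ) (k : Fin s → ℕ) (hk : ∀ i, 2 ≤ k i)
    (hsupp : ∀ i, (P i).support.card = k i)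
    (C : Fin s → ℝ) (hC : ∀ i, 0 < C i)
    (hμ : ∀ i, ∀ t : ℝ, 0 < t →
      mu1 (S1 (P i) t) ≤ ENNReal.ofReal (C i * t ^ ((1:ℝ)/((k i : ℝ)-1))))
    (y : Fin s → ℝ) (hy : ∀ i, 0 < y i) (hy1 : ∀ i, y i ≤ 1) :
    0 ≤ (-1:ℝ)^s * circleIntOn (⋂ i, S1 (P i) (y i))
          (fun z => ∏ i, Real.log ‖(P i).eval z‖) ∧
      (-1:ℝ)^s * circleIntOn (⋂ i, S1 (P i) (y i))
          (fun z => ∏ i, Real.log ‖(P i).eval z‖)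
        ≤ (∏ i, C i * Ifun s (k i) (y i)) ^ ((1:ℝ)/(s:ℝ)) := by
  classical
  have hsR : (0:ℝ) < (s:ℝ) := by exact_mod_cast (by omega : 0 < s)
  set E : ℝ → ℂ := fun θ => Complex.exp ((θ:ℂ) * Complex.I) with hE
  have hEabs : ∀ θ : ℝ, ‖E θ‖ = 1 := by
    intro θ; rw [hE]; simp [Complex.norm_exp]
  set q : Fin s → ℝ → ℝ := fun i θ => ‖(P i).eval (E θ)‖ with hq
  have hqcont : ∀ i, Continuous (q i) := by
    intro i
    exact continuous_norm.comp ((P i).continuous.comp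
      (Complex.continuous_exp.comp (Complex.continuous_ofReal.mul continuous_const)))
  have hqnn : ∀ i θ, 0 ≤ q i θ := fun i θ => norm_nonneg _
  set A' : Set ℝ := {θ | ∀ i, q i θ < y i} with hA'
  have hA'm : MeasurableSet A' := by
    have h : A' = ⋂ i, (q i) ⁻¹' (Set.Iio (y i)) := by
      ext θ; simp [hA']
    rw [h]
    exact MeasurableSet.iInter fun i => (hqcont i).measurable measurableSet_Iio
  have hmem : ∀ θ : ℝ, (E θ ∈ ⋂ i, S1 (P i) (y i)) ↔ θ ∈ A' := by
    intro θ
    simp only [Set.mem_iInter, S1, Set.mem_setOf_eq, hEabs θ, true_and, hA']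
    exact Iff.rfl
  have h2π : (0:ℝ) ≤ 2*π := by positivity
  set g : ℝ → ℝ := A'.indicator (fun θ => ∏ i, (-Real.log (q i θ))) with hg
  have hlognn : ∀ (i : Fin s) θ, θ ∈ A' → 0 ≤ -Real.log (q i θ) := by
    intro i θ hθ
    have := Real.log_nonpos (hqnn i θ) (le_of_lt (lt_of_lt_of_le (hθ i) (hy1 i)))
    linarith
  have hgnn : ∀ θ, 0 ≤ g θ := by
    intro θ
    rw [hg]
    by_cases hθ : θ ∈ A'
    · rw [Set.indicator_of_mem hθ]
      exact Finset.prod_nonneg fun i _ => hlognn i θ hθ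
    · rw [Set.indicator_of_notMem hθ]
  have hcirc : (-1:ℝ)^s * circleIntOn (⋂ i, S1 (P i) (y i))
      (fun z => ∏ i, Real.log ‖(P i).eval z‖)
      = ∫ θ in Set.Ioc (0:ℝ) (2*π), g θ := by
    rw [circleIntOn, intervalIntegral.integral_of_le h2π]
    have hsm := integral_smul (μ := volume.restrict (Set.Ioc (0:ℝ) (2*π))) ((-1:ℝ)^s)
      (fun θ : ℝ => Set.indicator (⋂ i, S1 (P i) (y i))
        (fun z => ∏ i, Real.log ‖(P i).eval z‖) (Complex.exp ((θ:ℂ) * Complex.I)))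
    simp only [smul_eq_mul] at hsm
    rw [← hsm]
    apply setIntegral_congr_fun measurableSet_Ioc
    intro θ _
    show (-1:ℝ)^s * Set.indicator (⋂ i, S1 (P i) (y i))
        (fun z => ∏ i, Real.log ‖(P i).eval z‖) (E θ) = g θ
    by_cases hθ : θ ∈ A'
    · rw [Set.indicator_of_mem ((hmem θ).mpr hθ), hg, Set.indicator_of_mem hθ]
      have e : ∀ i : Fin s, -Real.log (q i θ) = (-1) * Real.log (q i θ) := fun i => by ring
      simp only [e, Finset.prod_mul_distrib, Finset.prod_const, Finset.card_univ,
        Fintype.card_fin]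
      rfl
    · rw [Set.indicator_of_notMem (fun hc => hθ ((hmem θ).mp hc)), hg,
        Set.indicator_of_notMem hθ, mul_zero]
  constructor
  · rw [hcirc]
    exact integral_nonneg hgnn
  · rw [hcirc]
    set δ : Fin s → ℝ := fun i => 1/((k i:ℝ)-1) with hδdef
    have hδ : ∀ i, 0 < δ i := by
      intro i
      have h2 : (2:ℝ) ≤ (k i : ℝ) := by exact_mod_cast hk i
      rw [hδdef]
      have : (0:ℝ) < (k i:ℝ) - 1 := by linarith
      positivity
    set f : Fin s → ℝ → ℝ := fun i => A'.indicator (fun θ => -Real.log (q i θ)) with hf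
    have hfm : ∀ i, Measurable (f i) :=
      fun i => ((Real.measurable_log.comp (hqcont i).measurable).neg).indicator hA'm
    have hfnn : ∀ i θ, 0 ≤ f i θ := by
      intro i θ
      by_cases hθ : θ ∈ A'
      · simp only [hf, Set.indicator_of_mem hθ]; exact hlognn i θ hθ
      · simp only [hf, Set.indicator_of_notMem hθ]; exact le_rfl
    have hgf : ∀ θ, g θ = ∏ i, f i θ := by
      intro θ
      by_cases hθ : θ ∈ A'
      · rw [hg, Set.indicator_of_mem hθ]
        refine Finset.prod_congr rfl fun i _ => ?_
        simp only [hf, Set.indicator_of_mem hθ]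
      · rw [hg, Set.indicator_of_notMem hθ]
        symm
        apply Finset.prod_eq_zero (Finset.mem_univ (⟨0, by omega⟩ : Fin s))
        simp only [hf]
        exact Set.indicator_of_notMem hθ _
    set μ0 := volume.restrict (Set.Ioc (0:ℝ) (2*π)) with hμ0
    have hgm : Measurable g := by
      refine Measurable.indicator ?_ hA'm
      exact Finset.measurable_prod Finset.univ
        fun i _ => (Real.measurable_log.comp (hqcont i).measurable).neg
    have heq : ∫ θ in Set.Ioc (0:ℝ) (2*π), g θ
        = (∫⁻ θ, ENNReal.ofReal (g θ) ∂μ0).toReal := by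
      rw [integral_eq_lintegral_of_nonneg_ae (Filter.Eventually.of_forall hgnn)
        hgm.aestronglyMeasurable]
    have hG : ∀ θ, ENNReal.ofReal (g θ) = ∏ i, ENNReal.ofReal (f i θ) := by
      intro θ
      rw [hgf θ, ENNReal.ofReal_prod_of_nonneg fun i _ => hfnn i θ]
    have hHolder : ∫⁻ θ, ∏ i, ENNReal.ofReal (f i θ) ∂μ0
        ≤ ∏ i, (∫⁻ θ, ENNReal.ofReal (f i θ) ^ s ∂μ0) ^ ((1:ℝ)/(s:ℝ)) := by
      have hsum : ∑ _i : Fin s, (1:ℝ)/(s:ℝ) = 1 := by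
        rw [Finset.sum_const, Finset.card_univ, Fintype.card_fin, nsmul_eq_mul]
        field_simp
      have hH := ENNReal.lintegral_prod_norm_pow_le (μ := μ0) Finset.univ
        (f := fun (i : Fin s) (θ : ℝ) => ENNReal.ofReal (f i θ) ^ s)
        (fun i _ => ((hfm i).ennreal_ofReal.pow_const s).aemeasurable) hsum
        (fun i _ => by positivity)
      have hpt : ∀ θ (i : Fin s), (ENNReal.ofReal (f i θ) ^ s) ^ ((1:ℝ)/(s:ℝ))
          = ENNReal.ofReal (f i θ) := by
        intro θ i
        rw [← ENNReal.rpow_natCast, ← ENNReal.rpow_mul, mul_one_div,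
          div_self hsR.ne', ENNReal.rpow_one]
      calc ∫⁻ θ, ∏ i, ENNReal.ofReal (f i θ) ∂μ0
          = ∫⁻ θ, ∏ i, (ENNReal.ofReal (f i θ) ^ s) ^ ((1:ℝ)/(s:ℝ)) ∂μ0 := by
            apply lintegral_congr; intro θ
            exact Finset.prod_congr rfl fun i _ => (hpt θ i).symm
        _ ≤ _ := hH
    have hper : ∀ i, ∫⁻ θ, ENNReal.ofReal (f i θ) ^ s ∂μ0
        ≤ ENNReal.ofReal (C i * J s (δ i) (y i)) := by
      intro i
      apply aux_layer s hs (hδ i) (hC i).le (hy i) (hy1 i) (hfm i) (hfnn i) μ0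
      intro t ht
      set m := min (y i) (Real.exp (-t)) with hm
      have hmpos : 0 < m := lt_min (hy i) (Real.exp_pos _)
      have hsub : {a : ℝ | t < f i a} ∩ Set.Ioc 0 (2*π)
          ⊆ {θ : ℝ | θ ∈ Set.Ioc (0:ℝ) (2*π) ∧ E θ ∈ S1 (P i) m} := by
        rintro θ ⟨hθ1, hθ2⟩
        have hθ1' : t < f i θ := hθ1
        have hθA : θ ∈ A' := by
          by_contra hcon
          simp only [hf, Set.indicator_of_notMem hcon] at hθ1'
          linarith
        have hfi : f i θ = -Real.log (q i θ) := by
          simp only [hf, Set.indicator_of_mem hθA]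
        have hlt : Real.log (q i θ) < -t := by
          rw [hfi] at hθ1'; linarith
        have hqe : q i θ < Real.exp (-t) := by
          rcases (hqnn i θ).eq_or_lt with h0 | h0
          · rw [← h0]; exact Real.exp_pos _
          · rw [← Real.exp_log h0]; exact Real.exp_lt_exp.mpr hlt
        exact ⟨hθ2, hEabs θ, lt_min (hθA i) hqe⟩
      calc μ0 {a : ℝ | t < f i a}
          = volume ({a : ℝ | t < f i a} ∩ Set.Ioc 0 (2*π)) :=
            Measure.restrict_apply (measurableSet_lt measurable_const (hfm i))
        _ ≤ volume {θ : ℝ | θ ∈ Set.Ioc (0:ℝ) (2*π) ∧ E θ ∈ S1 (P i) m} := measure_mono hsub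
        _ = mu1 (S1 (P i) m) := rfl
        _ ≤ ENNReal.ofReal (C i * m ^ ((1:ℝ)/((k i:ℝ)-1))) := hμ i m hmpos
    -- nonnegativity of C i * J
    have hJnn : ∀ i, 0 ≤ C i * J s (δ i) (y i) := by
      intro i
      have hJ : 0 ≤ J s (δ i) (y i) := by
        rw [aux_J_eq s (hδ i) (hy i)]
        have ht0 : 0 ≤ -Real.log (y i) := by
          have := Real.log_nonpos (hy i).le (hy1 i); linarith
        refine mul_nonneg (hδ i).le ?_
        apply setIntegral_nonneg measurableSet_Ioi
        intro t htt
        have ht' : 0 ≤ t := le_trans ht0 (le_of_lt htt)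
        positivity
      exact mul_nonneg (hC i).le hJ
    rw [heq]
    have hGL : ∫⁻ θ, ENNReal.ofReal (g θ) ∂μ0 = ∫⁻ θ, ∏ i, ENNReal.ofReal (f i θ) ∂μ0 :=
      lintegral_congr hG
    rw [hGL]
    have hRHS_ne : (∏ i, ENNReal.ofReal (C i * J s (δ i) (y i)) ^ ((1:ℝ)/(s:ℝ))) ≠ ⊤ :=
      ENNReal.prod_ne_top fun i _ =>
        ENNReal.rpow_ne_top_of_nonneg (by positivity) ENNReal.ofReal_ne_top
    have hle2 : ∫⁻ θ, ∏ i, ENNReal.ofReal (f i θ) ∂μ0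
        ≤ ∏ i, ENNReal.ofReal (C i * J s (δ i) (y i)) ^ ((1:ℝ)/(s:ℝ)) :=
      le_trans hHolder (Finset.prod_le_prod' fun i _ =>
        ENNReal.rpow_le_rpow (hper i) (by positivity))
    calc (∫⁻ θ, ∏ i, ENNReal.ofReal (f i θ) ∂μ0).toReal
        ≤ (∏ i, ENNReal.ofReal (C i * J s (δ i) (y i)) ^ ((1:ℝ)/(s:ℝ))).toReal :=
          ENNReal.toReal_mono hRHS_ne hle2
      _ = (∏ i, C i * Ifun s (k i) (y i)) ^ ((1:ℝ)/(s:ℝ)) := by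
          have e1 : ∀ i : Fin s, ENNReal.ofReal (C i * J s (δ i) (y i)) ^ ((1:ℝ)/(s:ℝ))
              = ENNReal.ofReal ((C i * J s (δ i) (y i)) ^ ((1:ℝ)/(s:ℝ))) := fun i =>
            ENNReal.ofReal_rpow_of_nonneg (hJnn i) (by positivity)
          simp_rw [e1]
          rw [← ENNReal.ofReal_prod_of_nonneg fun i _ => Real.rpow_nonneg (hJnn i) _,
            ENNReal.toReal_ofReal (Finset.prod_nonneg fun i _ => Real.rpow_nonneg (hJnn i) _),
            Real.finset_prod_rpow Finset.univ _ (fun i _ => hJnn i) _]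
          rfl
end

section
/- Let s ≥ 1 be an integer, let P_1,…,P_s ∈ ℂ[x] be polynomials with exactly k_1,…,k_s ≥ 2 nonzero coefficients respectively, and suppose C_1,…,C_s > 0 are constants with μ_1(S(P_i,t)) ≤ C_i · t^{1/(k_i−1)} for all t > 0 and all i. Then for all 0 < y_1,…,y_s ≤ 1: 0 ≤ ∫_{S(P_1,y_1) ∩ ⋯ ∩ S(P_s,y_s)} ( −max_{1≤i≤s} log|P_i(x)| ) dx/x ≤ (2π)^{1−1/s} · ( C_1 · I_{s,k_1}(y_1) ⋯ C_s · I_{s,k_s}(y_s) )^{1/s²}. -/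
open MeasureTheory Polynomial Real Set Filter

lemma integrableOn_pow_mul_exp (n : ℕ) {δ : ℝ} (hδ : 0 < δ) (a : ℝ) :
    MeasureTheory.IntegrableOn (fun t : ℝ => t ^ n * Real.exp (-δ * t)) (Set.Ioi a) := by
  apply integrable_of_isBigO_exp_neg (half_pos hδ) (by fun_prop)
  have h1 : Filter.Tendsto (fun t : ℝ => t ^ n * Real.exp (-(δ/2) * t)) Filter.atTop (nhds 0) := by
    simpa [Real.rpow_natCast] using
      tendsto_rpow_mul_exp_neg_mul_atTop_nhds_zero n (δ/2) (half_pos hδ)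
  have heq : (fun t : ℝ => t ^ n * Real.exp (-δ * t))
      = fun t => (t ^ n * Real.exp (-(δ/2) * t)) * Real.exp (-(δ/2) * t) := by
    funext t
    rw [mul_assoc, ← Real.exp_add]
    ring_nf
  rw [heq]
  simpa using (h1.isBigO_one ℝ).mul (Asymptotics.isBigO_refl (fun t : ℝ => Real.exp (-(δ/2) * t)) Filter.atTop)

lemma parts_pow_exp (n : ℕ) {δ : ℝ} (hδ : 0 < δ) (a : ℝ) :
    δ * ∫ t in Set.Ioi a, t ^ (n+1) * Real.exp (-δ * t)
      = a ^ (n+1) * Real.exp (-δ * a)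
        + (n+1) * ∫ t in Set.Ioi a, t ^ n * Real.exp (-δ * t) := by
  have hint1 := integrableOn_pow_mul_exp (n+1) hδ a
  have hint0 := integrableOn_pow_mul_exp n hδ a
  have key : ∫ t in Set.Ioi a,
      (δ * (t ^ (n+1) * Real.exp (-δ * t)) - (n+1) * (t ^ n * Real.exp (-δ * t)))
      = a ^ (n+1) * Real.exp (-δ * a) := by
    have := integral_Ioi_of_hasDerivAt_of_tendsto
      (f := fun t : ℝ => -(t ^ (n+1) * Real.exp (-δ * t)))
      (f' := fun t : ℝ => δ * (t ^ (n+1) * Real.exp (-δ * t)) - (n+1) * (t ^ n * Real.exp (-δ * t)))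
      (a := a) (m := 0) ?_ ?_ ?_ ?_
    · rw [this]; ring
    · exact (((hasDerivAt_pow (n+1) a).mul
        (((hasDerivAt_id a).const_mul (-δ)).exp)).neg.continuousAt.continuousWithinAt)
    · intro x _
      have h := ((hasDerivAt_pow (n+1) x).mul
        (((hasDerivAt_id x).const_mul (-δ)).exp)).neg
      convert h using 1
      · rfl
      simp only [Nat.add_sub_cancel, id_eq]
      push_cast
      ring
    · exact ((hint1.const_mul δ).sub (hint0.const_mul (n+1)))
    · have h1 : Filter.Tendsto (fun t : ℝ => t ^ (n+1) * Real.exp (-δ * t)) Filter.atTop (nhds 0) := by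
        refine (tendsto_rpow_mul_exp_neg_mul_atTop_nhds_zero ((n+1 : ℕ) : ℝ) δ hδ).congr'
          (Filter.Eventually.of_forall fun x => ?_)
        simp only [neg_mul]
        norm_cast
      simpa using h1.neg
  rw [integral_sub (hint1.const_mul δ) (hint0.const_mul (n+1))] at key
  rw [integral_const_mul, integral_const_mul] at key
  linarith

lemma J_eq_Ioi (ℓ : ℕ) {δ y : ℝ} (hδ : 0 < δ) (hy : 0 < y) :
    J ℓ δ y = δ * ∫ t in Set.Ioi (-Real.log y), t ^ ℓ * Real.exp (-δ * t) := by
  have himg : (fun t : ℝ => Real.exp (-t)) '' Set.Ioi (-Real.log y) = Set.Ioo 0 y := by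
    ext z
    constructor
    · rintro ⟨t, ht, rfl⟩
      refine ⟨Real.exp_pos _, ?_⟩
      have : -t < Real.log y := by linarith [Set.mem_Ioi.mp ht]
      calc Real.exp (-t) < Real.exp (Real.log y) := Real.exp_lt_exp.mpr this
        _ = y := Real.exp_log hy
    · rintro ⟨hz0, hzy⟩
      refine ⟨-Real.log z, ?_, by simp [Real.exp_log hz0]⟩
      simp only [Set.mem_Ioi]
      have := Real.log_lt_log hz0 hzy
      linarith
  have hderiv : ∀ t ∈ Set.Ioi (-Real.log y),
      HasDerivWithinAt (fun t : ℝ => Real.exp (-t)) (-Real.exp (-t)) (Set.Ioi (-Real.log y)) t := by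
    intro t _
    have h := ((hasDerivAt_neg t).exp)
    simpa using h.hasDerivWithinAt
  have hinj : Set.InjOn (fun t : ℝ => Real.exp (-t)) (Set.Ioi (-Real.log y)) :=
    (Real.exp_injective.comp neg_injective).injOn
  have hcov := integral_image_eq_integral_abs_deriv_smul (F := ℝ) measurableSet_Ioi hderiv hinj
    (fun z => (Real.log z)^ℓ * z ^ (δ - 1))
  rw [himg] at hcov
  have hzint : ∫ z in (0:ℝ)..y, (Real.log z)^ℓ * z ^ (δ - 1)
      = ∫ z in Set.Ioo (0:ℝ) y, (Real.log z)^ℓ * z ^ (δ - 1) := by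
    rw [intervalIntegral.integral_of_le hy.le, MeasureTheory.integral_Ioc_eq_integral_Ioo]
  have hptwise : ∀ t : ℝ, |(-Real.exp (-t))| • ((Real.log (Real.exp (-t)))^ℓ * (Real.exp (-t)) ^ (δ - 1))
      = (-1:ℝ)^ℓ * (t ^ ℓ * Real.exp (-δ * t)) := by
    intro t
    rw [abs_neg, abs_of_pos (Real.exp_pos _), Real.log_exp, smul_eq_mul,
      Real.rpow_def_of_pos (Real.exp_pos _), Real.log_exp, neg_pow]
    have hexp : Real.exp (-t) * Real.exp (-t*(δ-1)) = Real.exp (-δ*t) := by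
      rw [← Real.exp_add]; ring_nf
    linear_combination ((-1:ℝ)^ℓ * t^ℓ) * hexp
  unfold J
  rw [hzint, hcov]
  rw [MeasureTheory.integral_congr_ae (Filter.Eventually.of_forall (fun t => hptwise t))]
  rw [MeasureTheory.integral_const_mul]
  have h11 : ((-1:ℝ)^ℓ) * ((-1:ℝ)^ℓ) = 1 := by
    rw [← pow_add]
    exact Even.neg_one_pow ⟨ℓ, rfl⟩
  linear_combination (δ * ∫ t in Set.Ioi (-Real.log y), t ^ ℓ * Real.exp (-δ * t)) * h11

lemma J_nonneg (ℓ : ℕ) {δ y : ℝ} (hδ : 0 < δ) (hy : 0 < y) (hy1 : y ≤ 1) :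
    0 ≤ J ℓ δ y := by
  rw [J_eq_Ioi ℓ hδ hy]
  have hT0 : (0:ℝ) ≤ -Real.log y := by
    have := Real.log_nonpos hy.le hy1
    linarith
  apply mul_nonneg hδ.le
  apply MeasureTheory.setIntegral_nonneg measurableSet_Ioi
  intro t ht
  have ht0 : 0 ≤ t := le_trans hT0 (le_of_lt ht)
  positivity

lemma phi_cont (n : ℕ) {δ y : ℝ} (hδ : 0 < δ) (hy : 0 < y) :
    Continuous (fun t : ℝ => (min y (Real.exp (-t))) ^ δ * (((n:ℝ)+1) * t^n)) := by
  apply Continuous.mul _ (by fun_prop)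
  apply Continuous.rpow_const (by fun_prop)
  intro t
  exact Or.inl (ne_of_gt (lt_min hy (Real.exp_pos _)))

lemma keyReal (n : ℕ) {δ y : ℝ} (hδ : 0 < δ) (hy : 0 < y) (hy1 : y ≤ 1) :
    MeasureTheory.IntegrableOn
      (fun t : ℝ => (min y (Real.exp (-t))) ^ δ * (((n:ℝ)+1) * t^n)) (Set.Ioi 0) ∧
    ∫ t in Set.Ioi (0:ℝ), (min y (Real.exp (-t))) ^ δ * (((n:ℝ)+1) * t^n) = J (n+1) δ y := by
  set T0 := -Real.log y with hT0def
  have hT0 : (0:ℝ) ≤ T0 := by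
    have := Real.log_nonpos hy.le hy1
    simp only [hT0def]; linarith
  have hyT0 : Real.exp (-T0) = y := by rw [hT0def, neg_neg, Real.exp_log hy]
  -- on Ioc 0 T0, min = y ; on Ioi T0, min = exp (-t)
  have hmin1 : ∀ t ∈ Set.Ioc (0:ℝ) T0, min y (Real.exp (-t)) = y := by
    intro t ht
    apply min_eq_left
    rw [← hyT0]
    exact Real.exp_le_exp.mpr (by linarith [ht.2])
  have hmin2 : ∀ t ∈ Set.Ioi T0, min y (Real.exp (-t)) = Real.exp (-t) := by
    intro t ht
    apply min_eq_right
    rw [← hyT0]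
    exact Real.exp_le_exp.mpr (by linarith [Set.mem_Ioi.mp ht])
  have hrpow : ∀ t : ℝ, (Real.exp (-t)) ^ δ = Real.exp (-δ * t) := by
    intro t
    rw [Real.rpow_def_of_pos (Real.exp_pos _), Real.log_exp]
    ring_nf
  have hint2 : MeasureTheory.IntegrableOn
      (fun t : ℝ => (min y (Real.exp (-t))) ^ δ * (((n:ℝ)+1) * t^n)) (Set.Ioi T0) := by
    apply MeasureTheory.IntegrableOn.congr_fun
      (f := fun t : ℝ => ((n:ℝ)+1) * (t^n * Real.exp (-δ * t)))
      (((integrableOn_pow_mul_exp n hδ T0).const_mul _)) _ measurableSet_Ioi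
    intro t ht
    simp only [hmin2 t ht, hrpow]
    ring
  have hint1 : MeasureTheory.IntegrableOn
      (fun t : ℝ => (min y (Real.exp (-t))) ^ δ * (((n:ℝ)+1) * t^n)) (Set.Ioc 0 T0) :=
    (phi_cont n hδ hy).integrableOn_Ioc
  have hunion : Set.Ioc (0:ℝ) T0 ∪ Set.Ioi T0 = Set.Ioi 0 := Set.Ioc_union_Ioi_eq_Ioi hT0
  constructor
  · rw [← hunion]; exact hint1.union hint2
  · rw [← hunion, MeasureTheory.setIntegral_union (Set.Ioc_disjoint_Ioi le_rfl)
      measurableSet_Ioi hint1 hint2]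
    have hI1 : ∫ t in Set.Ioc (0:ℝ) T0, (min y (Real.exp (-t))) ^ δ * (((n:ℝ)+1) * t^n)
        = y ^ δ * T0 ^ (n+1) := by
      rw [MeasureTheory.setIntegral_congr_fun measurableSet_Ioc
        (g := fun t : ℝ => y ^ δ * (((n:ℝ)+1) * t^n)) (fun t ht => by rw [hmin1 t ht])]
      rw [← intervalIntegral.integral_of_le hT0, intervalIntegral.integral_const_mul,
        intervalIntegral.integral_const_mul, integral_pow]
      have : ((n:ℝ)+1) ≠ 0 := by positivity
      field_simp
      simp
    have hI2 : ∫ t in Set.Ioi T0, (min y (Real.exp (-t))) ^ δ * (((n:ℝ)+1) * t^n)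
        = ((n:ℝ)+1) * ∫ t in Set.Ioi T0, t^n * Real.exp (-δ * t) := by
      rw [MeasureTheory.setIntegral_congr_fun measurableSet_Ioi
        (g := fun t : ℝ => ((n:ℝ)+1) * (t^n * Real.exp (-δ * t)))
        (fun t ht => by rw [hmin2 t ht, hrpow]; ring), MeasureTheory.integral_const_mul]
    have h2 : Real.exp (-δ * T0) = y ^ δ := by
      rw [Real.rpow_def_of_pos hy, hT0def]
      ring_nf
    rw [hI1, hI2, J_eq_Ioi (n+1) hδ hy, parts_pow_exp n hδ T0, h2]
    ring

lemma keyLintegral (n : ℕ) {δ y : ℝ} (hδ : 0 < δ) (hy : 0 < y) (hy1 : y ≤ 1) :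
    ∫⁻ t in Set.Ioi (0:ℝ),
        ENNReal.ofReal ((min y (Real.exp (-t))) ^ δ * (((n:ℝ)+1) * t^n))
      = ENNReal.ofReal (J (n+1) δ y) := by
  rw [← MeasureTheory.ofReal_integral_eq_lintegral_ofReal (keyReal n hδ hy hy1).1
    (MeasureTheory.ae_restrict_of_forall_mem measurableSet_Ioi (fun t ht => ?_)),
    (keyReal n hδ hy hy1).2]
  have ht0 : (0:ℝ) ≤ t := (Set.mem_Ioi.mp ht).le
  exact mul_nonneg (Real.rpow_nonneg (le_min hy.le (Real.exp_pos _).le) δ) (by positivity)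

lemma single_bound (n : ℕ) {q : ℝ → ℝ} (hq : Continuous q) (hq0 : ∀ θ, 0 ≤ q θ)
    {δ Ci yi : ℝ} (hδ : 0 < δ) (hCi : 0 < Ci) (hyi : 0 < yi) (hyi1 : yi ≤ 1)
    (μ : Measure ℝ) [SigmaFinite μ]
    (hbd : ∀ t : ℝ, 0 < t → μ {θ | q θ < t} ≤ ENNReal.ofReal (Ci * t ^ δ)) :
    ∫⁻ θ in {θ | q θ < yi}, ENNReal.ofReal ((-(Real.log (q θ)))^(n+1)) ∂μ
      ≤ ENNReal.ofReal (Ci * J (n+1) δ yi) := by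
  set f : ℝ → ℝ := fun θ => -Real.log (q θ) with hfdef
  have hfm : Measurable f := (Real.measurable_log.comp hq.measurable).neg
  have hT : MeasurableSet {θ | q θ < yi} := measurableSet_lt hq.measurable measurable_const
  have LC := MeasureTheory.lintegral_comp_eq_lintegral_meas_lt_mul (μ.restrict {θ | q θ < yi})
    (f := f) (g := fun t => ((n:ℝ)+1) * t^n)
    (MeasureTheory.ae_restrict_of_forall_mem hT (fun θ hθ => by
      have hl := Real.log_nonpos (hq0 θ) (le_trans (le_of_lt hθ) hyi1)
      show (0:ℝ) ≤ -Real.log (q θ)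
      linarith))
    hfm.aemeasurable
    (fun t _ => (by fun_prop : Continuous fun u : ℝ => ((n:ℝ)+1) * u^n).intervalIntegrable 0 t)
    (MeasureTheory.ae_restrict_of_forall_mem measurableSet_Ioi (fun t ht => by
      have h0 : (0:ℝ) < t := ht
      show (0:ℝ) ≤ ((n:ℝ)+1) * t^n
      positivity))
  have hpt : ∀ x : ℝ, (∫ u in (0:ℝ)..x, ((n:ℝ)+1) * u^n) = x^(n+1) := by
    intro x
    rw [intervalIntegral.integral_const_mul, integral_pow]
    have : ((n:ℝ)+1) ≠ 0 := by positivity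
    push_cast
    field_simp
    simp
  rw [MeasureTheory.lintegral_congr (fun θ => by rw [hpt (f θ)])] at LC
  rw [show (fun θ => ENNReal.ofReal ((-(Real.log (q θ)))^(n+1)))
      = fun θ => ENNReal.ofReal (f θ ^ (n+1)) from rfl, LC]
  -- now bound the tail integral
  have step1 : ∫⁻ t in Set.Ioi (0:ℝ),
      (μ.restrict {θ | q θ < yi}) {a | t < f a} * ENNReal.ofReal (((n:ℝ)+1) * t^n)
      ≤ ∫⁻ t in Set.Ioi (0:ℝ),
        ENNReal.ofReal (Ci * (min yi (Real.exp (-t))) ^ δ) * ENNReal.ofReal (((n:ℝ)+1) * t^n) := by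
    apply MeasureTheory.lintegral_mono_ae
    apply MeasureTheory.ae_restrict_of_forall_mem measurableSet_Ioi
    intro t ht
    apply mul_le_mul_left
    rw [Measure.restrict_apply (measurableSet_lt measurable_const hfm)]
    have hsub : {a | t < f a} ∩ {θ | q θ < yi} ⊆ {θ | q θ < min yi (Real.exp (-t))} := by
      rintro θ ⟨h1, h2⟩
      simp only [Set.mem_setOf_eq] at h1 h2 ⊢
      refine lt_min h2 ?_
      rcases eq_or_lt_of_le (hq0 θ) with he | hpos
      · rw [← he]; exact Real.exp_pos _
      · rw [← Real.exp_log hpos]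
        exact Real.exp_lt_exp.mpr (by simp only [hfdef] at h1; linarith)
    calc μ ({a | t < f a} ∩ {θ | q θ < yi}) ≤ μ {θ | q θ < min yi (Real.exp (-t))} :=
          measure_mono hsub
      _ ≤ ENNReal.ofReal (Ci * (min yi (Real.exp (-t))) ^ δ) :=
          hbd _ (lt_min hyi (Real.exp_pos _))
  refine le_trans step1 ?_
  have step2 : ∫⁻ t in Set.Ioi (0:ℝ),
      ENNReal.ofReal (Ci * (min yi (Real.exp (-t))) ^ δ) * ENNReal.ofReal (((n:ℝ)+1) * t^n)
      = ENNReal.ofReal Ci * ∫⁻ t in Set.Ioi (0:ℝ),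
        ENNReal.ofReal ((min yi (Real.exp (-t))) ^ δ * (((n:ℝ)+1) * t^n)) := by
    rw [← MeasureTheory.lintegral_const_mul' _ _ ENNReal.ofReal_ne_top]
    apply MeasureTheory.lintegral_congr
    intro t
    rw [ENNReal.ofReal_mul hCi.le,
      ENNReal.ofReal_mul (Real.rpow_nonneg (le_min hyi.le (Real.exp_pos _).le) δ), mul_assoc]
  rw [step2, keyLintegral n hδ hyi hyi1, ← ENNReal.ofReal_mul hCi.le]

/-- Bound for `− max_{1≤i≤s} log|P_i|` integrated over `S(P_1,y_1) ∩ ⋯ ∩ S(P_s,y_s)`. -/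
theorem max_log_integral_intersection_bound
    (s : ℕ) (hs : 0 < s)
    (P : Fin s → Polynomial ℂ) (k : Fin s → ℕ) (hk : ∀ i, 2 ≤ k i)
    (hsupp : ∀ i, (P i).support.card = k i)
    (C : Fin s → ℝ) (hC : ∀ i, 0 < C i)
    (hμ : ∀ i, ∀ t : ℝ, 0 < t →
      mu1 (S1 (P i) t) ≤ ENNReal.ofReal (C i * t ^ ((1:ℝ)/((k i : ℝ)-1))))
    (y : Fin s → ℝ) (hy : ∀ i, 0 < y i) (hy1 : ∀ i, y i ≤ 1) :
    0 ≤ circleIntOn (⋂ i, S1 (P i) (y i))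
          (fun z => -(Finset.univ.sup' ⟨⟨0, hs⟩, Finset.mem_univ _⟩
            (fun i => Real.log ‖(P i).eval z‖))) ∧
      circleIntOn (⋂ i, S1 (P i) (y i))
          (fun z => -(Finset.univ.sup' ⟨⟨0, hs⟩, Finset.mem_univ _⟩
            (fun i => Real.log ‖(P i).eval z‖)))
        ≤ (2*π) ^ ((1:ℝ) - 1/(s:ℝ)) *
            (∏ i, C i * Ifun s (k i) (y i)) ^ ((1:ℝ)/((s:ℝ)^2)) := by
  obtain ⟨n, rfl⟩ : ∃ n, s = n + 1 := ⟨s - 1, (Nat.succ_pred_eq_of_pos hs).symm⟩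
  have h2π : (0:ℝ) < 2*π := by positivity
  set e : ℝ → ℂ := fun θ => Complex.exp ((θ:ℂ) * Complex.I) with he
  have hecont : Continuous e := by fun_prop
  set q : Fin (n+1) → ℝ → ℝ := fun i θ => ‖(P i).eval (e θ)‖ with hqdef
  have hqc : ∀ i, Continuous (q i) := fun i =>
    continuous_norm.comp ((P i).continuous.comp hecont)
  have hq0 : ∀ i θ, 0 ≤ q i θ := fun i θ => norm_nonneg _
  set μ : Measure ℝ := volume.restrict (Set.Ioc 0 (2*π)) with hμdef
  have habs : ∀ θ : ℝ, ‖e θ‖ = 1 := fun θ => Complex.norm_exp_ofReal_mul_I θ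
  have hpre : ∀ i (t : ℝ), e ⁻¹' (S1 (P i) t) = {θ | q i θ < t} := by
    intro i t; ext θ; simp [S1, habs θ, hqdef]
  have hmu1 : ∀ i (t : ℝ), mu1 (S1 (P i) t) = μ {θ | q i θ < t} := by
    intro i t
    unfold mu1
    rw [hμdef, Measure.restrict_apply (measurableSet_lt (hqc i).measurable measurable_const)]
    congr 1
    ext θ
    simp only [Set.mem_setOf_eq, Set.mem_inter_iff, S1, hqdef]
    rw [habs θ]
    simp [and_comm]
    exact fun _ _ => Iff.rfl
  have ne : (Finset.univ : Finset (Fin (n+1))).Nonempty := ⟨⟨0, hs⟩, Finset.mem_univ _⟩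
  set h : ℝ → ℝ := fun θ => -(Finset.univ.sup' ne (fun i => Real.log (q i θ))) with hhdef
  set TT : Set ℝ := ⋂ i, {θ | q i θ < y i} with hTTdef
  have hTmeas : ∀ i, MeasurableSet {θ | q i θ < y i} := fun i =>
    measurableSet_lt (hqc i).measurable measurable_const
  have hTTmeas : MeasurableSet TT := MeasurableSet.iInter hTmeas
  have hindrw : ∀ θ : ℝ,
      Set.indicator (⋂ i, S1 (P i) (y i))
        (fun z => -(Finset.univ.sup' ⟨⟨0, hs⟩, Finset.mem_univ _⟩
          (fun i => Real.log ‖(P i).eval z‖))) (e θ)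
      = Set.indicator TT h θ := by
    intro θ
    rw [← Set.indicator_comp_right e]
    have hset : e ⁻¹' (⋂ i, S1 (P i) (y i)) = TT := by
      rw [Set.preimage_iInter]
      exact Set.iInter_congr (fun i => hpre i (y i))
    rw [hset]
    rfl
  have hmain : circleIntOn (⋂ i, S1 (P i) (y i))
      (fun z => -(Finset.univ.sup' ⟨⟨0, hs⟩, Finset.mem_univ _⟩
        (fun i => Real.log ‖(P i).eval z‖)))
      = ∫ θ, Set.indicator TT h θ ∂μ := by
    unfold circleIntOn
    rw [intervalIntegral.integral_of_le h2π.le]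
    exact integral_congr_ae (Filter.Eventually.of_forall hindrw)
  have hnn : ∀ θ ∈ TT, 0 ≤ h θ := by
    intro θ hθ
    have : Finset.univ.sup' ne (fun i => Real.log (q i θ)) ≤ 0 := by
      apply Finset.sup'_le
      intro i _
      have hqy : q i θ < y i := Set.mem_iInter.mp hθ i
      exact Real.log_nonpos (hq0 i θ) (hqy.le.trans (hy1 i))
    simp only [hhdef]; linarith
  have hhm : Measurable h := by
    have hsup : Measurable (Finset.univ.sup' ne (fun i => fun θ => Real.log (q i θ))) :=
      Finset.measurable_sup' ne (fun i _ => Real.measurable_log.comp (hqc i).measurable)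
    have : h = fun θ => -((Finset.univ.sup' ne (fun i => fun θ' => Real.log (q i θ'))) θ) := by
      funext θ
      rw [Finset.sup'_apply]
    rw [this]
    exact hsup.neg
  constructor
  · rw [hmain]
    exact integral_nonneg (Set.indicator_nonneg hnn)
  -- upper bound
  rw [hmain, integral_eq_lintegral_of_nonneg_ae
    (Filter.Eventually.of_forall (Set.indicator_nonneg hnn))
    (hhm.indicator hTTmeas).aestronglyMeasurable]
  set N : ℝ := ((n+1 : ℕ) : ℝ) with hNdef
  have hN1 : (1:ℝ) ≤ N := by rw [hNdef]; exact_mod_cast Nat.succ_le_succ (Nat.zero_le n)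
  have hN0 : (0:ℝ) < N := lt_of_lt_of_le one_pos hN1
  have hp2 : (0:ℝ) ≤ 1/N^2 := by positivity
  set F : Fin (n+1) → ℝ → ENNReal := fun i =>
    Set.indicator {θ' | q i θ' < y i}
      (fun θ' => ENNReal.ofReal ((-(Real.log (q i θ')))^(n+1))) with hFdef
  set ff : Option (Fin (n+1)) → ℝ → ENNReal := fun o => Option.elim o (fun _ => 1) F with hffdef
  set pp : Option (Fin (n+1)) → ℝ := fun o => Option.elim o (1 - 1/N) (fun _ => 1/N^2) with hppdef
  have hppsum : ∑ o : Option (Fin (n+1)), pp o = 1 := by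
    rw [Fintype.sum_option]
    simp only [hppdef, Option.elim, Finset.sum_const, Finset.card_univ, Fintype.card_fin,
      nsmul_eq_mul]
    rw [← hNdef]
    field_simp
    ring
  have hppnn : ∀ o, 0 ≤ pp o := by
    rintro (_|i)
    · simp only [hppdef, Option.elim]
      have : 1/N ≤ 1 := by
        rw [div_le_one hN0]; exact hN1
      linarith
    · simp only [hppdef, Option.elim]
      positivity
  have hffm : ∀ o, Measurable (ff o) := by
    rintro (_|i)
    · exact measurable_const
    · exact (ENNReal.measurable_ofReal.comp
        (((Real.measurable_log.comp (hqc i).measurable).neg).pow_const (n+1))).indicator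
        (hTmeas i)
  have Hold := ENNReal.lintegral_prod_norm_pow_le (μ := μ) Finset.univ
    (f := fun o => ff o) (fun o _ => (hffm o).aemeasurable) hppsum (fun o _ => hppnn o)
  have hptw : ∀ θ, ENNReal.ofReal (Set.indicator TT h θ) ≤ ∏ o : Option (Fin (n+1)), ff o θ ^ pp o := by
    intro θ
    by_cases hθ : θ ∈ TT
    · rw [Set.indicator_of_mem hθ]
      rw [Fintype.prod_option]
      simp only [hffdef, hppdef, Option.elim, ENNReal.one_rpow, one_mul]
      have hmem : ∀ i, θ ∈ {θ' | q i θ' < y i} := fun i => Set.mem_iInter.mp hθ i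
      have hh0 : 0 ≤ h θ := hnn θ hθ
      have hstep : ∀ i, (ENNReal.ofReal (h θ) ^ (n+1 : ℕ)) ^ ((1:ℝ)/N^2) ≤ F i θ ^ ((1:ℝ)/N^2) := by
        intro i
        apply ENNReal.rpow_le_rpow _ (by positivity)
        rw [hFdef]
        simp only [Set.indicator_of_mem (hmem i)]
        have hle : h θ ≤ -(Real.log (q i θ)) := by
          have := Finset.le_sup' (fun j => Real.log (q j θ)) (Finset.mem_univ i)
          simp only [hhdef]
          linarith
        rw [← ENNReal.ofReal_pow hh0]
        exact ENNReal.ofReal_le_ofReal (pow_le_pow_left₀ hh0 hle (n+1))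
      calc ENNReal.ofReal (h θ)
          = ((ENNReal.ofReal (h θ) ^ (n+1:ℕ)) ^ ((1:ℝ)/N^2)) ^ (n+1:ℕ) := by
            rw [hNdef, ← ENNReal.rpow_natCast (ENNReal.ofReal (h θ)) (n+1), ← ENNReal.rpow_mul,
              ← ENNReal.rpow_natCast _ (n+1), ← ENNReal.rpow_mul]
            rw [show (((n+1:ℕ):ℝ) * ((1:ℝ)/((n+1:ℕ):ℝ)^2) * ((n+1:ℕ):ℝ)) = 1 by
              have : ((n+1:ℕ):ℝ) ≠ 0 := by positivity
              field_simp]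
            rw [ENNReal.rpow_one]
        _ = ∏ _i : Fin (n+1), (ENNReal.ofReal (h θ) ^ (n+1:ℕ)) ^ ((1:ℝ)/N^2) := by
            rw [Finset.prod_const, Finset.card_univ, Fintype.card_fin]
        _ ≤ ∏ i : Fin (n+1), F i θ ^ ((1:ℝ)/N^2) :=
            Finset.prod_le_prod' (fun i _ => hstep i)
    · rw [Set.indicator_of_notMem hθ]
      simp
  have hL1 : ∫⁻ θ, ENNReal.ofReal (Set.indicator TT h θ) ∂μ
      ≤ ∏ o : Option (Fin (n+1)), (∫⁻ θ, ff o θ ∂μ) ^ pp o :=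
    le_trans (lintegral_mono hptw) Hold
  have hμuniv : ∫⁻ _θ, (1:ENNReal) ∂μ = ENNReal.ofReal (2*π) := by
    rw [lintegral_one, hμdef, Measure.restrict_apply_univ, Real.volume_Ioc]
    norm_num
  have hFi : ∀ i, ∫⁻ θ, F i θ ∂μ
      ≤ ENNReal.ofReal (C i * J (n+1) (1/((k i:ℝ)-1)) (y i)) := by
    intro i
    have hδi : (0:ℝ) < 1/((k i:ℝ)-1) := by
      have : (2:ℝ) ≤ (k i : ℝ) := by exact_mod_cast hk i
      have : (0:ℝ) < (k i:ℝ) - 1 := by linarith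
      positivity
    rw [hFdef]
    rw [lintegral_indicator (hTmeas i)]
    exact single_bound n (hqc i) (hq0 i) hδi (hC i) (hy i) (hy1 i) μ
      (fun t ht => by rw [← hmu1 i t]; exact hμ i t ht)
  set cc : Fin (n+1) → ℝ := fun i => C i * J (n+1) (1/((k i:ℝ)-1)) (y i) with hccdef
  have hccnn : ∀ i, 0 ≤ cc i := by
    intro i
    have hδi : (0:ℝ) < 1/((k i:ℝ)-1) := by
      have : (2:ℝ) ≤ (k i : ℝ) := by exact_mod_cast hk i
      have : (0:ℝ) < (k i:ℝ) - 1 := by linarith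
      positivity
    exact mul_nonneg (hC i).le (J_nonneg (n+1) hδi (hy i) (hy1 i))
  have hB : ∏ o : Option (Fin (n+1)), (∫⁻ θ, ff o θ ∂μ) ^ pp o
      ≤ ENNReal.ofReal ((2*π) ^ ((1:ℝ) - 1/N) * ∏ i, (cc i) ^ ((1:ℝ)/N^2)) := by
    rw [Fintype.prod_option]
    simp only [hffdef, hppdef, Option.elim]
    rw [hμuniv]
    conv_rhs => rw [ENNReal.ofReal_mul (by positivity), ← ENNReal.ofReal_rpow_of_pos h2π]
    apply mul_le_mul'
    · exact le_refl _
    · rw [ENNReal.ofReal_prod_of_nonneg (fun i _ => Real.rpow_nonneg (hccnn i) _)]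
      apply Finset.prod_le_prod' (fun i _ => ?_)
      calc (∫⁻ θ, F i θ ∂μ) ^ ((1:ℝ)/N^2)
          ≤ (ENNReal.ofReal (cc i)) ^ ((1:ℝ)/N^2) :=
            ENNReal.rpow_le_rpow (hFi i) hp2
        _ = ENNReal.ofReal ((cc i) ^ ((1:ℝ)/N^2)) := by
            rw [← ENNReal.ofReal_rpow_of_nonneg (hccnn i) hp2]
  have hfinal : ∫⁻ θ, ENNReal.ofReal (Set.indicator TT h θ) ∂μ
      ≤ ENNReal.ofReal ((2*π) ^ ((1:ℝ) - 1/N) * ∏ i, (cc i) ^ ((1:ℝ)/N^2)) :=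
    le_trans hL1 hB
  have := ENNReal.toReal_mono ENNReal.ofReal_ne_top hfinal
  rw [ENNReal.toReal_ofReal (mul_nonneg (Real.rpow_nonneg h2π.le _)
    (Finset.prod_nonneg (fun i _ => Real.rpow_nonneg (hccnn i) _)))] at this
  refine le_trans this (le_of_eq ?_)
  rw [Real.finset_prod_rpow Finset.univ cc (fun i _ => hccnn i) ((1:ℝ)/N^2)]
  rfl
end
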